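/- arXiv:1811.04800 — 6 statements merged into one kernel-verified Lean document; each statement's English description precedes it below -/
import Mathlib

section
/- Let Π = (𝒜, ℰ, ℛ) be an epistemic logic program and let Π' = (𝒜', ℰ', ℛ) be an epistemic logic program with the same set of rules but with 𝒜' ⊋ 𝒜 and ℰ' ⊋ ℰ. Then the set of candidate world views of Π equals the set of candidate world views of Π'. -/
variable {V : Type}

/-- A (default-negation) literal: an atom or its default negation. -/
inductive Lit (V : Type) : Type
  | pos (a : V) : Lit V
  | neg (a : V) : Lit V

namespace Lit

/-- `I ⊨ ℓ`. -/
def sat (I : Set V) : Lit V → Prop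
  | pos a => a ∈ I
  | neg a => a ∉ I

/-- The complementary literal (so that `I ⊨ ¬ℓ` iff `I ⊨ ℓ.flip`). -/
def flip : Lit V → Lit V
  | pos a => neg a
  | neg a => pos a

/-- The underlying atom of a literal. -/
def atom : Lit V → V
  | pos a => a
  | neg a => a

end Lit

/-- A standard (ASP) rule `head ← pos, {¬ℓ | ℓ ∈ neg}`; the set `neg` collects the
literals occurring under one extra default negation in the body (so an atom `a ∈ pos`
is a positive body atom, `Lit.pos c ∈ neg` encodes the body element `¬c`, and
`Lit.neg d ∈ neg` encodes the doubly negated body element `¬¬d`). -/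
structure Rule (V : Type) : Type where
  head : Set V
  pos : Set V
  neg : Set (Lit V)

namespace Rule

/-- The rule only uses atoms from `A`. -/
def wf (r : Rule V) (A : Set V) : Prop :=
  r.head ⊆ A ∧ r.pos ⊆ A ∧ ∀ ℓ ∈ r.neg, ℓ.atom ∈ A

/-- `I` is a model of the rule. -/
def sat (I : Set V) (r : Rule V) : Prop :=
  (r.pos ⊆ I ∧ ∀ ℓ ∈ r.neg, ¬ ℓ.sat I) → ∃ a ∈ r.head, a ∈ I

/-- `X` satisfies the GL-reduct of the rule w.r.t. `Y`: if the rule survives the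
reduct (no negated body literal is satisfied by `Y`), then `X` satisfies the
remaining rule `head ← pos`. -/
def redSat (Y X : Set V) (r : Rule V) : Prop :=
  (∀ ℓ ∈ r.neg, ¬ ℓ.sat Y) → (r.pos ⊆ X → ∃ a ∈ r.head, a ∈ X)

end Rule

/-- A ground logic program `(𝒜, ℛ)`. -/
structure Program (V : Type) : Type where
  A : Set V
  R : Set (Rule V)

namespace Program

def wf (P : Program V) : Prop := ∀ r ∈ P.R, r.wf P.A

/-- `I ⊨ P`. -/
def model (P : Program V) (I : Set V) : Prop := ∀ r ∈ P.R, r.sat I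

/-- `X ⊨ P^Y` (the GL-reduct). -/
def redModel (P : Program V) (Y X : Set V) : Prop := ∀ r ∈ P.R, r.redSat Y X

/-- `M` is an answer set of `P`. -/
def answerSet (P : Program V) (M : Set V) : Prop :=
  M ⊆ P.A ∧ P.model M ∧ ¬ ∃ M', M' ⊂ M ∧ P.redModel M M'

/-- `AS(P)`, the set of answer sets. -/
def AS (P : Program V) : Set (Set V) := {M | P.answerSet M}

/-- The set of SE-models `(X,Y)` with `X ⊆ Y ⊆ 𝒜`, `Y ⊨ P` and `X ⊨ P^Y`. -/
def SE (P : Program V) : Set (Set V × Set V) :=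
  {p | p.1 ⊆ p.2 ∧ p.2 ⊆ P.A ∧ P.model p.2 ∧ P.redModel p.2 p.1}

/-- Componentwise union of programs. -/
def union (P₁ P₂ : Program V) : Program V := ⟨P₁.A ∪ P₂.A, P₁.R ∪ P₂.R⟩

/-- Strong equivalence of plain logic programs. -/
def strongEq (P₁ P₂ : Program V) : Prop :=
  ∀ P : Program V, P.wf → (P₁.union P).AS = (P₂.union P).AS

end Program

/-- An ELP rule `head ← opos, ¬oneg, not epos, ¬ not eneg`: epistemic literals `not ℓ`
are identified with the literal `ℓ` they negate; `epos` collects the literals occurring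
under plain epistemic negation and `eneg` those occurring under default-negated
epistemic negation. -/
structure ERule (V : Type) : Type where
  head : Set V
  opos : Set V
  oneg : Set (Lit V)
  epos : Set (Lit V)
  eneg : Set (Lit V)

namespace ERule

/-- The rule only uses atoms from `A` and epistemic literals from `E`. -/
def wf (r : ERule V) (A : Set V) (E : Set (Lit V)) : Prop :=
  r.head ⊆ A ∧ r.opos ⊆ A ∧ (∀ ℓ ∈ r.oneg, ℓ.atom ∈ A) ∧ r.epos ⊆ E ∧ r.eneg ⊆ E

/-- The rule of the epistemic reduct w.r.t. guess `Φ` (meaningful when no `eneg`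
literal belongs to `Φ`, in which case: epistemic literals `not ℓ ∈ Φ` become `⊤`,
the remaining `not ℓ` in `epos` become `¬ℓ`, and `¬ not ℓ` in `eneg` becomes `¬¬ℓ`,
i.e. `¬(ℓ.flip)`, reading triple negations as single ones). -/
def reduct (r : ERule V) (Φ : Set (Lit V)) : Rule V :=
  ⟨r.head, r.opos, r.oneg ∪ (r.epos \ Φ) ∪ (Lit.flip '' r.eneg)⟩

/-- The underlying plain rule of an epistemic-negation-free ELP rule. -/
def toRule (r : ERule V) : Rule V := ⟨r.head, r.opos, r.oneg⟩

end ERule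

/-- A plain rule viewed as an ELP rule. -/
def Rule.toERule (r : Rule V) : ERule V := ⟨r.head, r.pos, r.neg, ∅, ∅⟩

/-- An epistemic logic program `(𝒜, ℰ, ℛ)`. -/
structure ELP (V : Type) : Type where
  A : Set V
  E : Set (Lit V)
  R : Set (ERule V)

/-- `I` is `Φ`-compatible w.r.t. `E`. -/
def compatible (E Φ : Set (Lit V)) (I : Set (Set V)) : Prop :=
  I.Nonempty ∧ (∀ ℓ ∈ Φ, ∃ J ∈ I, ¬ ℓ.sat J) ∧ (∀ ℓ ∈ E \ Φ, ∀ J ∈ I, ℓ.sat J)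

/-- `Φ` is realizable in the set `I` of interpretations (w.r.t. `E`). -/
def realizableIn (E Φ : Set (Lit V)) (I : Set (Set V)) : Prop :=
  ∃ I', I' ⊆ I ∧ compatible E Φ I'

/-- A guess `Φ` is consistent w.r.t. `E`: whenever `E` contains both `not a` and
`not ¬a`, `Φ` contains at least one of them. -/
def consistentGuess (E Φ : Set (Lit V)) : Prop :=
  ∀ a : V, Lit.pos a ∈ E → Lit.neg a ∈ E → (Lit.pos a ∈ Φ ∨ Lit.neg a ∈ Φ)

namespace ELP

/-- Well-formedness: `E` consists of epistemic literals over `A`, and every rule is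
over `A` and `E`. -/
def wf (P : ELP V) : Prop :=
  (∀ ℓ ∈ P.E, ℓ.atom ∈ P.A) ∧ ∀ r ∈ P.R, r.wf P.A P.E

/-- An epistemic-negation-free (plain ASP) program viewed as an ELP. -/
def isASP (P : ELP V) : Prop := P.E = ∅ ∧ ∀ r ∈ P.R, r.epos = ∅ ∧ r.eneg = ∅

/-- Componentwise union of ELPs. -/
def union (P₁ P₂ : ELP V) : ELP V := ⟨P₁.A ∪ P₂.A, P₁.E ∪ P₂.E, P₁.R ∪ P₂.R⟩

/-- The epistemic reduct `P^Φ`: rules with some `eneg` literal in `Φ` are deleted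
(their body contains `¬⊤`), the remaining rules are reduced. -/
def eReduct (P : ELP V) (Φ : Set (Lit V)) : Program V :=
  ⟨P.A, {q | ∃ r ∈ P.R, (∀ ℓ ∈ r.eneg, ℓ ∉ Φ) ∧ q = r.reduct Φ}⟩

/-- `M` is a candidate world view of `P` w.r.t. the guess `Φ`. -/
def isCWVwrt (P : ELP V) (Φ : Set (Lit V)) (M : Set (Set V)) : Prop :=
  Φ ⊆ P.E ∧ M = (P.eReduct Φ).AS ∧ compatible P.E Φ M

/-- `M` is a candidate world view of `P`. -/
def isCWV (P : ELP V) (M : Set (Set V)) : Prop := ∃ Φ, P.isCWVwrt Φ M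

/-- `M` is a world view of `P`: a CWV whose associated guess is subset-maximal. -/
def isWV (P : ELP V) (M : Set (Set V)) : Prop :=
  ∃ Φ, P.isCWVwrt Φ M ∧ ∀ Φ' M', P.isCWVwrt Φ' M' → ¬ Φ ⊂ Φ'

/-- `Φ` is realizable in `P`: realizable in the set of models of `P^Φ`. -/
def realizable (P : ELP V) (Φ : Set (Lit V)) : Prop :=
  realizableIn P.E Φ {I | I ⊆ P.A ∧ (P.eReduct Φ).model I}

/-- The SE-function of `P`: `SE(Π^Φ)` if `Φ` is realizable in `P`, and `∅` otherwise. -/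
def SEfun (P : ELP V) (Φ : Set (Lit V)) : Set (Set V × Set V) :=
  {p | P.realizable Φ ∧ p ∈ (P.eReduct Φ).SE}

/-- CWV-equivalence. -/
def cwvEq (P₁ P₂ : ELP V) : Prop := ∀ M, P₁.isCWV M ↔ P₂.isCWV M

/-- WV-equivalence. -/
def wvEq (P₁ P₂ : ELP V) : Prop := ∀ M, P₁.isWV M ↔ P₂.isWV M

/-- Strong ELP-CWV-equivalence. -/
def strongELPCWVEq (P₁ P₂ : ELP V) : Prop :=
  ∀ Q : ELP V, Q.wf → cwvEq (P₁.union Q) (P₂.union Q)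

/-- Strong ELP-WV-equivalence. -/
def strongELPWVEq (P₁ P₂ : ELP V) : Prop :=
  ∀ Q : ELP V, Q.wf → wvEq (P₁.union Q) (P₂.union Q)

/-- Strong ASP-CWV-equivalence. -/
def strongASPCWVEq (P₁ P₂ : ELP V) : Prop :=
  ∀ Q : ELP V, Q.wf → Q.isASP → cwvEq (P₁.union Q) (P₂.union Q)

/-- Strong ASP-WV-equivalence. -/
def strongASPWVEq (P₁ P₂ : ELP V) : Prop :=
  ∀ Q : ELP V, Q.wf → Q.isASP → wvEq (P₁.union Q) (P₂.union Q)

end ELP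

/-- The Gelfond-CWA program `p' ← ¬ not ¬p` over `𝒜 = {p, p'}`, `ℰ = {not p, not ¬p}`. -/
def GelfondCWA (p p' : V) : ELP V :=
  ⟨{p, p'}, {Lit.pos p, Lit.neg p}, {⟨{p'}, ∅, ∅, ∅, {Lit.neg p}⟩}⟩

/-- The Shen-Eiter-CWA program `p' ← not p` over `𝒜 = {p, p'}`, `ℰ = {not p, not ¬p}`. -/
def ShenEiterCWA (p p' : V) : ELP V :=
  ⟨{p, p'}, {Lit.pos p, Lit.neg p}, {⟨{p'}, ∅, ∅, {Lit.pos p}, ∅⟩}⟩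

lemma Lit.flip_atom (ℓ : Lit V) : ℓ.flip.atom = ℓ.atom := by cases ℓ <;> rfl

lemma AS_mono (A A' : Set V) (Rs : Set (Rule V)) (hAA : A ⊆ A')
    (hwf : ∀ r ∈ Rs, r.wf A) :
    (Program.mk A Rs).AS = (Program.mk A' Rs).AS := by
  ext M
  simp only [Program.AS, Set.mem_setOf_eq, Program.answerSet]
  constructor
  · rintro ⟨h1, h2, h3⟩
    exact ⟨h1.trans hAA, h2, h3⟩
  · rintro ⟨h1, h2, h3⟩
    refine ⟨?_, h2, h3⟩
    by_contra hsub
    apply h3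
    refine ⟨M ∩ A, ⟨Set.inter_subset_left, fun h => hsub fun x hx => (h hx).2⟩, ?_⟩
    intro r hr hneg hpos
    obtain ⟨a, ha, haM⟩ := h2 r hr ⟨hpos.trans Set.inter_subset_left, hneg⟩
    exact ⟨a, ha, haM, (hwf r hr).1 ha⟩

lemma mem_iff_of_inter_eq {E Φ Φ' : Set (Lit V)} (h : Φ ∩ E = Φ' ∩ E)
    {ℓ : Lit V} (hℓ : ℓ ∈ E) : ℓ ∈ Φ ↔ ℓ ∈ Φ' := by
  have := Set.ext_iff.mp h ℓ
  simp only [Set.mem_inter_iff, hℓ, and_true] at this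
  exact this

/-- Extending both the atom domain and the epistemic-literal domain of an
ELP (keeping the rules) does not change its candidate world views. -/
theorem stmt0 {V : Type} (A A' : Set V) (E E' : Set (Lit V)) (R : Set (ERule V))
    (hwf : (ELP.mk A E R).wf) (hE'A' : ∀ ℓ ∈ E', ℓ.atom ∈ A')
    (hA : A ⊂ A') (hE : E ⊂ E') :
    {M | (ELP.mk A E R).isCWV M} = {M | (ELP.mk A' E' R).isCWV M} := by
  ext M
  simp only [Set.mem_setOf_eq, ELP.isCWV, ELP.isCWVwrt]
  obtain ⟨hEA, hRwf⟩ := hwf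
  have hAA' : A ⊆ A' := hA.subset
  have hEE' : E ⊆ E' := hE.subset
  have key : ∀ Φ Φ' : Set (Lit V), Φ ∩ E = Φ' ∩ E →
      ((ELP.mk A E R).eReduct Φ).AS = ((ELP.mk A' E' R).eReduct Φ').AS := by
    intro Φ Φ' hΦ
    have hrules : {q | ∃ r ∈ R, (∀ ℓ ∈ r.eneg, ℓ ∉ Φ) ∧ q = r.reduct Φ}
        = {q | ∃ r ∈ R, (∀ ℓ ∈ r.eneg, ℓ ∉ Φ') ∧ q = r.reduct Φ'} := by
      have hred : ∀ r ∈ R, r.reduct Φ = r.reduct Φ' := by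
        intro r hr
        obtain ⟨_, _, _, hepos, heneg⟩ := hRwf r hr
        unfold ERule.reduct
        congr 1
        have : r.epos \ Φ = r.epos \ Φ' := by
          ext ℓ
          simp only [Set.mem_diff]
          constructor
          · rintro ⟨h1, h2⟩
            exact ⟨h1, fun hc => h2 ((mem_iff_of_inter_eq hΦ (hepos h1)).mpr hc)⟩
          · rintro ⟨h1, h2⟩
            exact ⟨h1, fun hc => h2 ((mem_iff_of_inter_eq hΦ (hepos h1)).mp hc)⟩
        rw [this]
      have heneg : ∀ r ∈ R, ((∀ ℓ ∈ r.eneg, ℓ ∉ Φ) ↔ (∀ ℓ ∈ r.eneg, ℓ ∉ Φ')) := by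
        intro r hr
        obtain ⟨_, _, _, _, heneg⟩ := hRwf r hr
        constructor
        · intro h ℓ hℓ hc
          exact h ℓ hℓ ((mem_iff_of_inter_eq hΦ (heneg hℓ)).mpr hc)
        · intro h ℓ hℓ hc
          exact h ℓ hℓ ((mem_iff_of_inter_eq hΦ (heneg hℓ)).mp hc)
      ext q
      simp only [Set.mem_setOf_eq]
      constructor
      · rintro ⟨r, hr, h1, rfl⟩
        exact ⟨r, hr, (heneg r hr).mp h1, hred r hr⟩
      · rintro ⟨r, hr, h1, rfl⟩
        exact ⟨r, hr, (heneg r hr).mpr h1, (hred r hr).symm⟩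
    show (Program.mk A _).AS = (Program.mk A' _).AS
    rw [hrules]
    apply AS_mono _ _ _ hAA'
    rintro q ⟨r, hr, -, rfl⟩
    obtain ⟨hh, hp, hon, hepos, heneg⟩ := hRwf r hr
    refine ⟨hh, hp, ?_⟩
    rintro ℓ (⟨hℓ | hℓ⟩ | hℓ)
    · exact hon ℓ hℓ
    · exact hEA ℓ (hepos hℓ.1)
    · obtain ⟨ℓ', hℓ', rfl⟩ := hℓ
      rw [Lit.flip_atom]
      exact hEA ℓ' (heneg hℓ')
  constructor
  · rintro ⟨Φ, hΦE, hM, hne, h2, h3⟩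
    refine ⟨Φ ∪ {ℓ | ℓ ∈ E' ∧ ℓ ∉ E ∧ ∃ J ∈ M, ¬ ℓ.sat J}, ?_, ?_, hne, ?_, ?_⟩
    · rintro ℓ (hℓ | hℓ)
      · exact hEE' (hΦE hℓ)
      · exact hℓ.1
    · rw [hM]
      apply key
      ext ℓ
      simp only [Set.mem_inter_iff, Set.mem_union, Set.mem_setOf_eq]
      constructor
      · rintro ⟨h1, h2⟩; exact ⟨Or.inl h1, h2⟩
      · rintro ⟨h1 | h1, hℓE⟩
        · exact ⟨h1, hℓE⟩
        · exact absurd hℓE h1.2.1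
    · rintro ℓ (hℓ | hℓ)
      · exact h2 ℓ hℓ
      · exact hℓ.2.2
    · rintro ℓ ⟨hℓE', hℓΦ'⟩ J hJ
      simp only [Set.mem_union, Set.mem_setOf_eq, not_or] at hℓΦ'
      by_cases hℓE : ℓ ∈ E
      · exact h3 ℓ ⟨hℓE, hℓΦ'.1⟩ J hJ
      · by_contra hc
        exact hℓΦ'.2 ⟨hℓE', hℓE, J, hJ, hc⟩
  · rintro ⟨Φ', hΦE', hM, hne, h2, h3⟩
    refine ⟨Φ' ∩ E, Set.inter_subset_right, ?_, hne, ?_, ?_⟩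
    · rw [hM]
      apply (key _ _ _).symm
      rw [Set.inter_assoc, Set.inter_self]
    · intro ℓ hℓ
      exact h2 ℓ hℓ.1
    · rintro ℓ ⟨hℓE, hℓΦ⟩ J hJ
      refine h3 ℓ ⟨hEE' hℓE, fun hc => hℓΦ ⟨hc, hℓE⟩⟩ J hJ
end

section
/- Let Π = (𝒜, ℰ, ℛ) be an epistemic logic program and let Π' = (𝒜, ℰ', ℛ) be an epistemic logic program with the same set of rules and atom domain, but with ℰ' ⊋ ℰ and ℰ'∖ℰ = {not ℓ} for a single epistemic literal not ℓ. Then CWV(Π) = CWV(Π'). -/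
variable {V : Type}

/-- Extending the epistemic-literal domain of an ELP by a single
epistemic literal (keeping the rules and the atom domain) does not change its
candidate world views. -/
theorem stmt3 {V : Type} (A : Set V) (E E' : Set (Lit V)) (R : Set (ERule V))
    (ℓ : Lit V) (hwf : (ELP.mk A E R).wf) (hℓ : ℓ.atom ∈ A)
    (hE : E ⊂ E') (hdiff : E' \ E = {ℓ}) :
    {M | (ELP.mk A E R).isCWV M} = {M | (ELP.mk A E' R).isCWV M} := by
  obtain ⟨hwfE, hwfR⟩ := hwf
  have hℓE : ℓ ∉ E := by
    have : ℓ ∈ E' \ E := by rw [hdiff]; exact Set.mem_singleton ℓ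
    exact this.2
  have hℓE' : ℓ ∈ E' := by
    have : ℓ ∈ E' \ E := by rw [hdiff]; exact Set.mem_singleton ℓ
    exact this.1
  have hEE' : E ⊆ E' := hE.1
  have hE'eq : E' = E ∪ {ℓ} := by
    apply Set.Subset.antisymm
    · intro x hx
      by_cases hxE : x ∈ E
      · exact Or.inl hxE
      · right
        have : x ∈ E' \ E := ⟨hx, hxE⟩
        rw [hdiff] at this; exact this
    · intro x hx
      rcases hx with hx | hx
      · exact hEE' hx
      · rw [Set.mem_singleton_iff] at hx; rw [hx]; exact hℓE'
  -- Key: epistemic reducts coincide for guesses agreeing on E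
  have key : ∀ Φ₁ Φ₂ : Set (Lit V), Φ₁ ∩ E = Φ₂ ∩ E →
      (ELP.mk A E R).eReduct Φ₁ = (ELP.mk A E' R).eReduct Φ₂ := by
    intro Φ₁ Φ₂ h
    have hmem : ∀ m ∈ E, (m ∈ Φ₁ ↔ m ∈ Φ₂) := by
      intro m hm
      constructor
      · intro h1
        have : m ∈ Φ₁ ∩ E := ⟨h1, hm⟩
        rw [h] at this; exact this.1
      · intro h2
        have : m ∈ Φ₂ ∩ E := ⟨h2, hm⟩
        rw [← h] at this; exact this.1
    unfold ELP.eReduct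
    congr 1
    ext q
    simp only [Set.mem_setOf_eq]
    constructor
    · rintro ⟨r, hr, hneg, rfl⟩
      obtain ⟨-, -, -, hepos, heneg⟩ := hwfR r hr
      refine ⟨r, hr, ?_, ?_⟩
      · intro m hm hmΦ₂
        exact hneg m hm ((hmem m (heneg hm)).2 hmΦ₂)
      · have hd : r.epos \ Φ₁ = r.epos \ Φ₂ := by
          ext x
          simp only [Set.mem_diff]
          constructor
          · rintro ⟨hx, hxΦ⟩; exact ⟨hx, fun h2 => hxΦ ((hmem x (hepos hx)).2 h2)⟩
          · rintro ⟨hx, hxΦ⟩; exact ⟨hx, fun h1 => hxΦ ((hmem x (hepos hx)).1 h1)⟩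
        unfold ERule.reduct
        rw [hd]
    · rintro ⟨r, hr, hneg, rfl⟩
      obtain ⟨-, -, -, hepos, heneg⟩ := hwfR r hr
      refine ⟨r, hr, ?_, ?_⟩
      · intro m hm hmΦ₁
        exact hneg m hm ((hmem m (heneg hm)).1 hmΦ₁)
      · have hd : r.epos \ Φ₂ = r.epos \ Φ₁ := by
          ext x
          simp only [Set.mem_diff]
          constructor
          · rintro ⟨hx, hxΦ⟩; exact ⟨hx, fun h2 => hxΦ ((hmem x (hepos hx)).1 h2)⟩
          · rintro ⟨hx, hxΦ⟩; exact ⟨hx, fun h1 => hxΦ ((hmem x (hepos hx)).2 h1)⟩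
        unfold ERule.reduct
        rw [hd]
  ext M
  simp only [Set.mem_setOf_eq, ELP.isCWV, ELP.isCWVwrt]
  constructor
  · rintro ⟨Φ, hΦE, hM, hne, h1, h2⟩
    by_cases hc : ∃ J ∈ M, ¬ ℓ.sat J
    · refine ⟨Φ ∪ {ℓ}, ?_, ?_, hne, ?_, ?_⟩
      · exact Set.union_subset (hΦE.trans hEE') (by simpa using hℓE')
      · rw [← key Φ (Φ ∪ {ℓ})]; exact hM
        apply Set.Subset.antisymm
        · exact Set.inter_subset_inter_left E Set.subset_union_left
        · rintro x ⟨hx1, hx2⟩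
          rcases hx1 with hx | hx
          · exact ⟨hx, hx2⟩
          · exact absurd hx2 (by rw [Set.mem_singleton_iff] at hx; rw [hx]; exact hℓE)
      · intro m hm
        rcases hm with hm | hm
        · exact h1 m hm
        · rw [Set.mem_singleton_iff] at hm; rw [hm]; exact hc
      · rintro m ⟨hm1, hm2⟩ J hJ
        rw [hE'eq] at hm1
        rcases hm1 with hm | hm
        · exact h2 m ⟨hm, fun h => hm2 (Or.inl h)⟩ J hJ
        · exact absurd (Or.inr hm) hm2
    · push_neg at hc
      refine ⟨Φ, hΦE.trans hEE', ?_, hne, h1, ?_⟩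
      · rw [← key Φ Φ rfl]; exact hM
      · rintro m ⟨hm1, hm2⟩ J hJ
        rw [hE'eq] at hm1
        rcases hm1 with hm | hm
        · exact h2 m ⟨hm, hm2⟩ J hJ
        · rw [Set.mem_singleton_iff] at hm; rw [hm]; exact hc J hJ
  · rintro ⟨Φ', hΦ'E', hM, hne, h1, h2⟩
    refine ⟨Φ' \ {ℓ}, ?_, ?_, hne, ?_, ?_⟩
    · intro m hm
      have := hΦ'E' hm.1
      rw [hE'eq] at this
      rcases this with h | h
      · exact h
      · exact absurd h hm.2
    · rw [key (Φ' \ {ℓ}) Φ']; exact hM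
      apply Set.Subset.antisymm
      · exact Set.inter_subset_inter_left E Set.diff_subset
      · rintro x ⟨hx1, hx2⟩
        exact ⟨⟨hx1, fun h => hℓE (by rw [Set.mem_singleton_iff] at h; rw [← h]; exact hx2)⟩, hx2⟩
    · intro m hm; exact h1 m hm.1
    · rintro m ⟨hm1, hm2⟩ J hJ
      refine h2 m ⟨hEE' hm1, fun h => ?_⟩ J hJ
      exact hm2 ⟨h, fun hx => hℓE (by rw [Set.mem_singleton_iff] at hx; rw [← hx]; exact hm1)⟩
end

section
/- Let Π = (𝒜, ℰ, ℛ) be an epistemic logic program with SE-function 𝒮ℰ_Π, let ℳ be a set of interpretations, and let Φ ⊆ ℰ be a guess. Then ℳ is a candidate world view of Π with respect to the guess Φ if and only if ℳ = { Y | (Y,Y) ∈ 𝒮ℰ_Π(Φ) and there is no X ⊊ Y with (X,Y) ∈ 𝒮ℰ_Π(Φ) } and ℳ is Φ-compatible w.r.t. ℰ. -/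
variable {V : Type}

lemma AS_eq_SE (Q : Program V) :
    Q.AS = {Y | (Y, Y) ∈ Q.SE ∧ ¬ ∃ X, X ⊂ Y ∧ (X, Y) ∈ Q.SE} := by
  ext Y
  constructor
  · rintro ⟨hA, hm, hmin⟩
    refine ⟨⟨subset_rfl, hA, hm, ?_⟩, ?_⟩
    · intro r hr hneg hpos
      exact hm r hr ⟨hpos, hneg⟩
    · rintro ⟨X, hXY, _, _, _, hred⟩
      exact hmin ⟨X, hXY, hred⟩
  · rintro ⟨⟨_, hA, hm, _⟩, hmin⟩
    refine ⟨hA, hm, ?_⟩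
    rintro ⟨X, hXY, hred⟩
    exact hmin ⟨X, hXY, hXY.subset, hA, hm, hred⟩

/-- `M` is a CWV of `P` w.r.t. the guess `Φ` iff
`M = { Y | (Y,Y) ∈ 𝒮ℰ_P(Φ), ¬∃ X ⊂ Y, (X,Y) ∈ 𝒮ℰ_P(Φ) }` and `M` is `Φ`-compatible. -/
theorem stmt4 {V : Type} (P : ELP V) (hwf : P.wf) (M : Set (Set V))
    (Φ : Set (Lit V)) (hΦ : Φ ⊆ P.E) :
    P.isCWVwrt Φ M ↔
      (M = {Y | (Y, Y) ∈ P.SEfun Φ ∧ ¬ ∃ X, X ⊂ Y ∧ (X, Y) ∈ P.SEfun Φ} ∧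
        compatible P.E Φ M) := by
  constructor
  · rintro ⟨-, hAS, hcomp⟩
    have hreal : P.realizable Φ := by
      refine ⟨M, ?_, hcomp⟩
      intro I hI
      rw [hAS] at hI
      exact ⟨hI.1, hI.2.1⟩
    refine ⟨?_, hcomp⟩
    rw [hAS, AS_eq_SE]
    ext Y
    simp only [Set.mem_setOf_eq, ELP.SEfun, Set.mem_setOf_eq]
    constructor
    · rintro ⟨h1, h2⟩
      exact ⟨⟨hreal, h1⟩, fun ⟨X, hX, _, hse⟩ => h2 ⟨X, hX, hse⟩⟩
    · rintro ⟨⟨_, h1⟩, h2⟩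
      exact ⟨h1, fun ⟨X, hX, hse⟩ => h2 ⟨X, hX, hreal, hse⟩⟩
  · rintro ⟨hM, hcomp⟩
    refine ⟨hΦ, ?_, hcomp⟩
    have hreal : P.realizable Φ := by
      obtain ⟨Y, hY⟩ := hcomp.1
      rw [hM] at hY
      exact hY.1.1
    rw [hM, AS_eq_SE]
    ext Y
    simp only [Set.mem_setOf_eq, ELP.SEfun, Set.mem_setOf_eq]
    constructor
    · rintro ⟨⟨_, h1⟩, h2⟩
      exact ⟨h1, fun ⟨X, hX, hse⟩ => h2 ⟨X, hX, hreal, hse⟩⟩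
    · rintro ⟨h1, h2⟩
      exact ⟨⟨hreal, h1⟩, fun ⟨X, hX, _, hse⟩ => h2 ⟨X, hX, hse⟩⟩
end

section
/- If two epistemic logic programs (over the same atom domain 𝒜 and epistemic-literal domain ℰ) have the same SE-function, then they are CWV-equivalent, and hence also WV-equivalent. -/
variable {V : Type}

/-- A model of a program satisfies its own GL-reduct. -/
lemma model_redModel {P : Program V} {I : Set V} (hm : P.model I) : P.redModel I I := by
  intro r hr hneg hpos
  exact hm r hr ⟨hpos, hneg⟩

/-- Answer sets are characterized by SE-models. -/
lemma answerSet_iff_SE (P : Program V) (M : Set V) :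
    P.answerSet M ↔ ((M, M) ∈ P.SE ∧ ∀ X, X ⊂ M → (X, M) ∉ P.SE) := by
  constructor
  · rintro ⟨hMA, hmod, hmin⟩
    refine ⟨⟨subset_rfl, hMA, hmod, model_redModel hmod⟩, ?_⟩
    intro X hX hXSE
    exact hmin ⟨X, hX, hXSE.2.2.2⟩
  · rintro ⟨⟨-, hMA, hmod, -⟩, hmin⟩
    refine ⟨hMA, hmod, ?_⟩
    rintro ⟨M', hM', hred⟩
    exact hmin M' hM' ⟨hM'.subset, hMA, hmod, hred⟩

lemma AS_eq_of_SE_eq {P₁ P₂ : Program V} (h : P₁.SE = P₂.SE) : P₁.AS = P₂.AS := by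
  ext M
  simp only [Program.AS, Set.mem_setOf_eq, answerSet_iff_SE, h]

/-- Key direction: same SE-function transfers candidate world views. -/
lemma cwvwrt_transfer {V : Type} {A : Set V} {E : Set (Lit V)} {R₁ R₂ : Set (ERule V)}
    (h : ∀ Φ : Set (Lit V), (ELP.mk A E R₁).SEfun Φ = (ELP.mk A E R₂).SEfun Φ)
    {Φ : Set (Lit V)} {M : Set (Set V)}
    (hc : (ELP.mk A E R₁).isCWVwrt Φ M) : (ELP.mk A E R₂).isCWVwrt Φ M := by
  obtain ⟨hΦE, hM, hcomp⟩ := hc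
  have hreal₁ : (ELP.mk A E R₁).realizable Φ := by
    refine ⟨M, ?_, hcomp⟩
    intro I hI
    rw [hM] at hI
    exact ⟨hI.1, hI.2.1⟩
  -- some answer set gives a nonempty SE-model set
  obtain ⟨I, hIM⟩ := hcomp.1
  have hIAS : ((ELP.mk A E R₁).eReduct Φ).answerSet I := by
    rw [hM] at hIM; exact hIM
  have hISE : (I, I) ∈ ((ELP.mk A E R₁).eReduct Φ).SE :=
    ⟨subset_rfl, hIAS.1, hIAS.2.1, model_redModel hIAS.2.1⟩
  have hmem₂ : (I, I) ∈ (ELP.mk A E R₂).SEfun Φ := by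
    rw [← h Φ]; exact ⟨hreal₁, hISE⟩
  have hreal₂ : (ELP.mk A E R₂).realizable Φ := hmem₂.1
  have hSEeq : ((ELP.mk A E R₁).eReduct Φ).SE = ((ELP.mk A E R₂).eReduct Φ).SE := by
    ext p
    constructor
    · intro hp
      have : p ∈ (ELP.mk A E R₂).SEfun Φ := by rw [← h Φ]; exact ⟨hreal₁, hp⟩
      exact this.2
    · intro hp
      have : p ∈ (ELP.mk A E R₁).SEfun Φ := by rw [h Φ]; exact ⟨hreal₂, hp⟩
      exact this.2
  exact ⟨hΦE, by rw [hM, AS_eq_of_SE_eq hSEeq], hcomp⟩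

/-- ELPs (over the same atom domain and epistemic-literal domain) with the
same SE-function are CWV-equivalent, and hence also WV-equivalent. -/
theorem stmt5 {V : Type} (A : Set V) (E : Set (Lit V)) (R₁ R₂ : Set (ERule V))
    (hwf₁ : (ELP.mk A E R₁).wf) (hwf₂ : (ELP.mk A E R₂).wf)
    (h : ∀ Φ : Set (Lit V), (ELP.mk A E R₁).SEfun Φ = (ELP.mk A E R₂).SEfun Φ) :
    ELP.cwvEq (ELP.mk A E R₁) (ELP.mk A E R₂) ∧
      ELP.wvEq (ELP.mk A E R₁) (ELP.mk A E R₂) := by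
  have h' : ∀ Φ : Set (Lit V), (ELP.mk A E R₂).SEfun Φ = (ELP.mk A E R₁).SEfun Φ :=
    fun Φ => (h Φ).symm
  have key : ∀ Φ M, (ELP.mk A E R₁).isCWVwrt Φ M ↔ (ELP.mk A E R₂).isCWVwrt Φ M :=
    fun Φ M => ⟨cwvwrt_transfer h, cwvwrt_transfer h'⟩
  constructor
  · intro M
    constructor
    · rintro ⟨Φ, hΦ⟩; exact ⟨Φ, (key Φ M).1 hΦ⟩
    · rintro ⟨Φ, hΦ⟩; exact ⟨Φ, (key Φ M).2 hΦ⟩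
  · intro M
    constructor
    · rintro ⟨Φ, hΦ, hmax⟩
      exact ⟨Φ, (key Φ M).1 hΦ, fun Φ' M' hΦ' => hmax Φ' M' ((key Φ' M').2 hΦ')⟩
    · rintro ⟨Φ, hΦ, hmax⟩
      exact ⟨Φ, (key Φ M).2 hΦ, fun Φ' M' hΦ' => hmax Φ' M' ((key Φ' M').1 hΦ')⟩
end

section
/- Let Π₁ and Π₂ be two epistemic logic programs over a finite atom domain 𝒜 and epistemic-literal domain ℰ. The following statements are equivalent: (1) Π₁ and Π₂ are strongly ELP-CWV-equivalent; (2) Π₁ and Π₂ are strongly ASP-CWV-equivalent; (3) Π₁ and Π₂ are strongly ELP-WV-equivalent; (4) Π₁ and Π₂ are strongly ASP-WV-equivalent; (5) 𝒮ℰ_{Π₁} = 𝒮ℰ_{Π₂}. -/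
variable {V : Type}

/-! ### Auxiliary development -/

open Classical

section Aux

namespace Lit

@[simp] lemma sat_pos {I : Set V} {a : V} : (Lit.pos a).sat I ↔ a ∈ I := Iff.rfl
@[simp] lemma sat_neg {I : Set V} {a : V} : (Lit.neg a).sat I ↔ a ∉ I := Iff.rfl
@[simp] lemma atom_pos {a : V} : (Lit.pos a).atom = a := rfl
@[simp] lemma atom_neg {a : V} : (Lit.neg a).atom = a := rfl
@[simp] lemma flip_sat {I : Set V} {ℓ : Lit V} : (ℓ.flip).sat I ↔ ¬ ℓ.sat I := by
  cases ℓ with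
  | pos a => simp [Lit.flip]
  | neg a => simp [Lit.flip]
@[simp] lemma atom_flip {ℓ : Lit V} : ℓ.flip.atom = ℓ.atom := by
  cases ℓ <;> rfl

lemma sat_congr {B I I' : Set V} {ℓ : Lit V} (h : ℓ.atom ∈ B)
    (hII' : I ∩ B = I' ∩ B) : ℓ.sat I ↔ ℓ.sat I' := by
  have key : ∀ a ∈ B, (a ∈ I ↔ a ∈ I') := by
    intro a ha
    constructor
    · intro hI
      have : a ∈ I' ∩ B := hII' ▸ (Set.mem_inter hI ha)
      exact this.1
    · intro hI
      have : a ∈ I ∩ B := hII'.symm ▸ (Set.mem_inter hI ha)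
      exact this.1
  cases ℓ with
  | pos a => simpa using key a h
  | neg a => simpa using not_congr (key a h)

end Lit

namespace Rule

lemma sat_congr {B I I' : Set V} {r : Rule V} (hwf : r.wf B)
    (hII' : I ∩ B = I' ∩ B) : r.sat I ↔ r.sat I' := by
  obtain ⟨hh, hp, hn⟩ := hwf
  have hmem : ∀ a ∈ B, (a ∈ I ↔ a ∈ I') := by
    intro a ha
    constructor
    · intro hI; exact (hII' ▸ (Set.mem_inter hI ha) : a ∈ I' ∩ B).1
    · intro hI; exact (hII'.symm ▸ (Set.mem_inter hI ha) : a ∈ I ∩ B).1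
  unfold Rule.sat
  constructor
  · rintro h ⟨hpos, hneg⟩
    obtain ⟨a, haH, haI⟩ := h ⟨fun x hx => (hmem x (hp hx)).2 (hpos hx),
      fun ℓ hℓ hsat => hneg ℓ hℓ ((Lit.sat_congr (hn ℓ hℓ) hII').mp hsat)⟩
    exact ⟨a, haH, (hmem a (hh haH)).1 haI⟩
  · rintro h ⟨hpos, hneg⟩
    obtain ⟨a, haH, haI⟩ := h ⟨fun x hx => (hmem x (hp hx)).1 (hpos hx),
      fun ℓ hℓ hsat => hneg ℓ hℓ ((Lit.sat_congr (hn ℓ hℓ) hII').mpr hsat)⟩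
    exact ⟨a, haH, (hmem a (hh haH)).2 haI⟩

lemma redSat_congr {B Y Y' X X' : Set V} {r : Rule V} (hwf : r.wf B)
    (hYY' : Y ∩ B = Y' ∩ B) (hXX' : X ∩ B = X' ∩ B) :
    r.redSat Y X ↔ r.redSat Y' X' := by
  obtain ⟨hh, hp, hn⟩ := hwf
  have hmem : ∀ a ∈ B, (a ∈ X ↔ a ∈ X') := by
    intro a ha
    constructor
    · intro hI; exact (hXX' ▸ (Set.mem_inter hI ha) : a ∈ X' ∩ B).1
    · intro hI; exact (hXX'.symm ▸ (Set.mem_inter hI ha) : a ∈ X ∩ B).1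
  unfold Rule.redSat
  constructor
  · intro h hneg hpos
    obtain ⟨a, haH, haX⟩ := h
      (fun ℓ hℓ hsat => hneg ℓ hℓ ((Lit.sat_congr (hn ℓ hℓ) hYY').mp hsat))
      (fun x hx => (hmem x (hp hx)).2 (hpos hx))
    exact ⟨a, haH, (hmem a (hh haH)).1 haX⟩
  · intro h hneg hpos
    obtain ⟨a, haH, haX⟩ := h
      (fun ℓ hℓ hsat => hneg ℓ hℓ ((Lit.sat_congr (hn ℓ hℓ) hYY').mpr hsat))
      (fun x hx => (hmem x (hp hx)).1 (hpos hx))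
    exact ⟨a, haH, (hmem a (hh haH)).2 haX⟩

lemma sat_iff_redSat_self {I : Set V} {r : Rule V} : r.sat I ↔ r.redSat I I := by
  unfold Rule.sat Rule.redSat
  tauto

end Rule

namespace Program

lemma model_union {P Q : Program V} {I : Set V} :
    (P.union Q).model I ↔ P.model I ∧ Q.model I := by
  constructor
  · intro h
    exact ⟨fun r hr => h r (Or.inl hr), fun r hr => h r (Or.inr hr)⟩
  · rintro ⟨h1, h2⟩ r hr
    rcases hr with hr | hr
    · exact h1 r hr
    · exact h2 r hr

lemma redModel_union {P Q : Program V} {Y X : Set V} :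
    (P.union Q).redModel Y X ↔ P.redModel Y X ∧ Q.redModel Y X := by
  constructor
  · intro h
    exact ⟨fun r hr => h r (Or.inl hr), fun r hr => h r (Or.inr hr)⟩
  · rintro ⟨h1, h2⟩ r hr
    rcases hr with hr | hr
    · exact h1 r hr
    · exact h2 r hr

lemma model_congr {B I I' : Set V} {P : Program V} (hwf : P.wf) (hA : P.A = B)
    (hII' : I ∩ B = I' ∩ B) : P.model I ↔ P.model I' := by
  constructor
  · intro h r hr
    exact (Rule.sat_congr (hA ▸ hwf r hr) hII').mp (h r hr)
  · intro h r hr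
    exact (Rule.sat_congr (hA ▸ hwf r hr) hII').mpr (h r hr)

lemma redModel_congr {B Y Y' X X' : Set V} {P : Program V} (hwf : P.wf) (hA : P.A = B)
    (hYY' : Y ∩ B = Y' ∩ B) (hXX' : X ∩ B = X' ∩ B) :
    P.redModel Y X ↔ P.redModel Y' X' := by
  constructor
  · intro h r hr
    exact (Rule.redSat_congr (hA ▸ hwf r hr) hYY' hXX').mp (h r hr)
  · intro h r hr
    exact (Rule.redSat_congr (hA ▸ hwf r hr) hYY' hXX').mpr (h r hr)

lemma model_iff_redModel_self {P : Program V} {I : Set V} :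
    P.model I ↔ P.redModel I I := by
  unfold Program.model Program.redModel
  exact forall₂_congr (fun r _ => Rule.sat_iff_redSat_self)

lemma mem_SE {P : Program V} {X Y : Set V} :
    (X, Y) ∈ P.SE ↔ X ⊆ Y ∧ Y ⊆ P.A ∧ P.model Y ∧ P.redModel Y X := Iff.rfl

lemma mem_AS {P : Program V} {M : Set V} :
    M ∈ P.AS ↔ M ⊆ P.A ∧ P.model M ∧ ¬ ∃ M', M' ⊂ M ∧ P.redModel M M' := Iff.rfl

end Program

end Aux


section ASTransfer

lemma inter_self_right (M B : Set V) : (M ∩ B) ∩ B = M ∩ B := by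
  rw [Set.inter_assoc, Set.inter_self]

/-- Classical consequence of SE-model equality: answer sets of unions coincide. -/
lemma AS_transfer_subset {B : Set V} {G₁ G₂ G : Program V}
    (h₁A : G₁.A = B) (h₂A : G₂.A = B) (hw₁ : G₁.wf) (hw₂ : G₂.wf)
    (hse : G₁.SE = G₂.SE) : (G₁.union G).AS ⊆ (G₂.union G).AS := by
  intro M hM
  rw [Program.mem_AS] at hM ⊢
  obtain ⟨hMA, hmod, hmin⟩ := hM
  have hunA : (G₁.union G).A = (G₂.union G).A := by
    show G₁.A ∪ G.A = G₂.A ∪ G.A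
    rw [h₁A, h₂A]
  obtain ⟨hmod₁, hmodG⟩ := Program.model_union.mp hmod
  have hMB : M ∩ B = (M ∩ B) ∩ B := (inter_self_right M B).symm
  have hmodB₁ : G₁.model (M ∩ B) := (Program.model_congr hw₁ h₁A hMB).mp hmod₁
  have hSE1 : (M ∩ B, M ∩ B) ∈ G₁.SE := by
    rw [Program.mem_SE]
    exact ⟨subset_refl _, h₁A ▸ Set.inter_subset_right, hmodB₁,
      Program.model_iff_redModel_self.mp hmodB₁⟩
  have hSE2 : (M ∩ B, M ∩ B) ∈ G₂.SE := hse ▸ hSE1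
  have hmodB₂ : G₂.model (M ∩ B) := (Program.mem_SE.mp hSE2).2.2.1
  have hmod₂ : G₂.model M := (Program.model_congr hw₂ h₂A hMB).mpr hmodB₂
  refine ⟨hunA ▸ hMA, Program.model_union.mpr ⟨hmod₂, hmodG⟩, ?_⟩
  rintro ⟨M', hlt, hred⟩
  obtain ⟨hred₂, hredG⟩ := Program.redModel_union.mp hred
  have hM'B : M' ∩ B = (M' ∩ B) ∩ B := (inter_self_right M' B).symm
  have hSE2' : (M' ∩ B, M ∩ B) ∈ G₂.SE := by
    rw [Program.mem_SE]
    refine ⟨Set.inter_subset_inter_left B hlt.subset, h₂A ▸ Set.inter_subset_right,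
      hmodB₂, ?_⟩
    exact (Program.redModel_congr hw₂ h₂A hMB hM'B).mp hred₂
  have hSE1' : (M' ∩ B, M ∩ B) ∈ G₁.SE := hse ▸ hSE2'
  have hred₁ : G₁.redModel M M' :=
    (Program.redModel_congr hw₁ h₁A hMB hM'B).mpr (Program.mem_SE.mp hSE1').2.2.2
  exact hmin ⟨M', hlt, fun r hr => hr.elim (fun h => hred₁ r h) (fun h => hredG r h)⟩

lemma AS_transfer {B : Set V} {G₁ G₂ G : Program V}
    (h₁A : G₁.A = B) (h₂A : G₂.A = B) (hw₁ : G₁.wf) (hw₂ : G₂.wf)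
    (hse : G₁.SE = G₂.SE) : (G₁.union G).AS = (G₂.union G).AS :=
  Set.Subset.antisymm (AS_transfer_subset h₁A h₂A hw₁ hw₂ hse)
    (AS_transfer_subset h₂A h₁A hw₂ hw₁ hse.symm)

end ASTransfer


section Reducts

@[simp] lemma ERule.reduct_toERule (r : Rule V) (Φ : Set (Lit V)) :
    (r.toERule).reduct Φ = r := by
  cases r with
  | mk h p n =>
    unfold Rule.toERule ERule.reduct
    simp

@[simp] lemma ERule.toERule_eneg (r : Rule V) : (r.toERule).eneg = ∅ := rfl

lemma ERule.reduct_wf' {r : ERule V} {A : Set V} {E Φ : Set (Lit V)}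
    (hr : r.wf A E) (hE : ∀ ℓ ∈ E, ℓ.atom ∈ A) : (r.reduct Φ).wf A := by
  obtain ⟨hh, hp, hon, hepos, heneg⟩ := hr
  refine ⟨hh, hp, ?_⟩
  intro ℓ hℓ
  rcases hℓ with (hℓ | hℓ) | hℓ
  · exact hon ℓ hℓ
  · exact hE ℓ (hepos hℓ.1)
  · obtain ⟨m, hm, rfl⟩ := hℓ
    rw [Lit.atom_flip]
    exact hE m (heneg hm)

lemma ELP.eReduct_A (P : ELP V) (Φ : Set (Lit V)) : (P.eReduct Φ).A = P.A := rfl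

lemma ELP.mem_eReduct_R {P : ELP V} {Φ : Set (Lit V)} {q : Rule V} :
    q ∈ (P.eReduct Φ).R ↔ ∃ r ∈ P.R, (∀ ℓ ∈ r.eneg, ℓ ∉ Φ) ∧ q = r.reduct Φ := Iff.rfl

lemma ELP.eReduct_wf {P : ELP V} (hP : P.wf) (Φ : Set (Lit V)) : (P.eReduct Φ).wf := by
  intro q hq
  obtain ⟨r, hr, _, rfl⟩ := hq
  exact ERule.reduct_wf' (hP.2 r hr) hP.1

lemma ELP.eReduct_union (P Q : ELP V) (Φ : Set (Lit V)) :
    (P.union Q).eReduct Φ = (P.eReduct Φ).union (Q.eReduct Φ) := by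
  unfold ELP.eReduct ELP.union Program.union
  simp only
  congr 1
  ext q
  constructor
  · rintro ⟨r, hr | hr, hc, rfl⟩
    · exact Or.inl ⟨r, hr, hc, rfl⟩
    · exact Or.inr ⟨r, hr, hc, rfl⟩
  · rintro (⟨r, hr, hc, rfl⟩ | ⟨r, hr, hc, rfl⟩)
    · exact ⟨r, Or.inl hr, hc, rfl⟩
    · exact ⟨r, Or.inr hr, hc, rfl⟩

lemma ELP.eReduct_inter {P : ELP V} (hP : P.wf) (Φ : Set (Lit V)) :
    P.eReduct Φ = P.eReduct (Φ ∩ P.E) := by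
  unfold ELP.eReduct
  congr 1
  ext q
  constructor
  · rintro ⟨r, hr, hc, rfl⟩
    obtain ⟨_, _, _, hepos, heneg⟩ := hP.2 r hr
    refine ⟨r, hr, fun ℓ hℓ h => hc ℓ hℓ h.1, ?_⟩
    unfold ERule.reduct
    congr 1
    ext ℓ
    simp only [Set.mem_union, Set.mem_diff, Set.mem_inter_iff]
    constructor
    · rintro ((h | ⟨h1, h2⟩) | h)
      · exact Or.inl (Or.inl h)
      · exact Or.inl (Or.inr ⟨h1, fun hx => h2 hx.1⟩)
      · exact Or.inr h
    · rintro ((h | ⟨h1, h2⟩) | h)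
      · exact Or.inl (Or.inl h)
      · exact Or.inl (Or.inr ⟨h1, fun hx => h2 ⟨hx, hepos h1⟩⟩)
      · exact Or.inr h
  · rintro ⟨r, hr, hc, rfl⟩
    obtain ⟨_, _, _, hepos, heneg⟩ := hP.2 r hr
    refine ⟨r, hr, fun ℓ hℓ h => hc ℓ hℓ ⟨h, heneg hℓ⟩, ?_⟩
    unfold ERule.reduct
    congr 1
    ext ℓ
    simp only [Set.mem_union, Set.mem_diff, Set.mem_inter_iff]
    constructor
    · rintro ((h | ⟨h1, h2⟩) | h)
      · exact Or.inl (Or.inl h)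
      · exact Or.inl (Or.inr ⟨h1, fun hx => h2 ⟨hx, hepos h1⟩⟩)
      · exact Or.inr h
    · rintro ((h | ⟨h1, h2⟩) | h)
      · exact Or.inl (Or.inl h)
      · exact Or.inl (Or.inr ⟨h1, fun hx => h2 hx.1⟩)
      · exact Or.inr h

lemma ELP.eReduct_toERule_image (A : Set V) (E : Set (Lit V)) (R : Set (Rule V))
    (Φ : Set (Lit V)) :
    (ELP.mk A E (Rule.toERule '' R)).eReduct Φ = Program.mk A R := by
  unfold ELP.eReduct
  congr 1
  ext q
  constructor
  · rintro ⟨r, ⟨r₀, hr₀, rfl⟩, hc, rfl⟩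
    rw [ERule.reduct_toERule]
    exact hr₀
  · intro hq
    exact ⟨q.toERule, ⟨q, hq, rfl⟩, by simp, (ERule.reduct_toERule q Φ).symm⟩

end Reducts


section Guess

@[simp] lemma ELP.union_E (P Q : ELP V) : (P.union Q).E = P.E ∪ Q.E := rfl
@[simp] lemma ELP.union_A (P Q : ELP V) : (P.union Q).A = P.A ∪ Q.A := rfl
@[simp] lemma ELP.union_R (P Q : ELP V) : (P.union Q).R = P.R ∪ Q.R := rfl

/-- The guess of a candidate world view is determined by the set of interpretations. -/
lemma isCWVwrt_guess_eq {U : ELP V} {Φ : Set (Lit V)} {M : Set (Set V)}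
    (h : U.isCWVwrt Φ M) : Φ = {ℓ | ℓ ∈ U.E ∧ ∃ J ∈ M, ¬ ℓ.sat J} := by
  obtain ⟨hΦE, _, _, h2, h3⟩ := h
  ext ℓ
  constructor
  · intro hℓ
    exact ⟨hΦE hℓ, h2 ℓ hℓ⟩
  · rintro ⟨hE, J, hJ, hns⟩
    by_contra hn
    exact hns (h3 ℓ ⟨hE, hn⟩ J hJ)

lemma cwvEq_to_wvEq {U₁ U₂ : ELP V} (hE : U₁.E = U₂.E) (h : U₁.cwvEq U₂) :
    U₁.wvEq U₂ := by
  have key : ∀ (W₁ W₂ : ELP V), W₁.E = W₂.E → W₁.cwvEq W₂ → ∀ M, W₁.isWV M → W₂.isWV M := by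
    intro W₁ W₂ hWE hW M hM
    obtain ⟨Φ, hc, hmax⟩ := hM
    obtain ⟨Φ2, hc2⟩ := (hW M).mp ⟨Φ, hc⟩
    have hΦ2 : Φ2 = Φ := by
      rw [isCWVwrt_guess_eq hc2, ← hWE, ← isCWVwrt_guess_eq hc]
    refine ⟨Φ2, hc2, ?_⟩
    intro Φ3 M3 h3
    obtain ⟨Φ4, h4⟩ := (hW M3).mpr ⟨Φ3, h3⟩
    have hΦ4 : Φ4 = Φ3 := by
      rw [isCWVwrt_guess_eq h4, hWE, ← isCWVwrt_guess_eq h3]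
    rw [hΦ2]
    exact fun hcon => hmax Φ4 M3 h4 (hΦ4.symm ▸ hcon)
  intro M
  exact ⟨key U₁ U₂ hE h M, key U₂ U₁ hE.symm (fun M => (h M).symm) M⟩

lemma compatible_inter {E Φ : Set (Lit V)} {I : Set (Set V)} (h : compatible E Φ I) :
    compatible E (Φ ∩ E) I := by
  obtain ⟨h1, h2, h3⟩ := h
  exact ⟨h1, fun ℓ hℓ => h2 ℓ hℓ.1, fun ℓ hℓ => h3 ℓ ⟨hℓ.1, fun hc => hℓ.2 ⟨hc, hℓ.1⟩⟩⟩

/-- A candidate world view of a union program yields realizability of the guess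
(restricted to `P.E`) in the left component. -/
lemma isCWVwrt_realizable {P Q : ELP V} (hP : P.wf) {Φ : Set (Lit V)} {M : Set (Set V)}
    (h : (P.union Q).isCWVwrt Φ M) : P.realizable (Φ ∩ P.E) := by
  obtain ⟨hΦE, hMAS, hne, h2, h3⟩ := h
  have hsat_congr : ∀ (ℓ : Lit V), ℓ ∈ P.E → ∀ J : Set V, (ℓ.sat J ↔ ℓ.sat (J ∩ P.A)) := by
    intro ℓ hℓ J
    exact Lit.sat_congr (hP.1 ℓ hℓ) (inter_self_right J P.A).symm
  have hmodM : ∀ J ∈ M, (P.eReduct Φ).model J := by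
    intro J hJ
    rw [hMAS] at hJ
    obtain ⟨_, hmodel, _⟩ := Program.mem_AS.mp hJ
    intro q hq
    refine hmodel q ?_
    rw [ELP.eReduct_union]
    exact Or.inl hq
  refine ⟨(fun J => J ∩ P.A) '' M, ?_, ?_, ?_, ?_⟩
  · rintro _ ⟨J, hJ, rfl⟩
    refine ⟨Set.inter_subset_right, ?_⟩
    rw [← ELP.eReduct_inter hP Φ]
    exact (Program.model_congr (ELP.eReduct_wf hP Φ) (ELP.eReduct_A P Φ)
      (inter_self_right J P.A).symm).mp (hmodM J hJ)
  · exact hne.image _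
  · rintro ℓ ⟨hℓΦ, hℓE⟩
    obtain ⟨J, hJ, hns⟩ := h2 ℓ hℓΦ
    exact ⟨J ∩ P.A, Set.mem_image_of_mem _ hJ, fun hc => hns ((hsat_congr ℓ hℓE J).mpr hc)⟩
  · rintro ℓ ⟨hℓE, hℓn⟩ _ ⟨J, hJ, rfl⟩
    have hmem : ℓ ∈ (P.union Q).E \ Φ := ⟨Or.inl hℓE, fun hc => hℓn ⟨hc, hℓE⟩⟩
    exact (hsat_congr ℓ hℓE J).mp (h3 ℓ hmem J hJ)

end Guess


section FiveToOne

lemma ELP.mem_SEfun {P : ELP V} {Φ : Set (Lit V)} {p : Set V × Set V} :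
    p ∈ P.SEfun Φ ↔ P.realizable Φ ∧ p ∈ (P.eReduct Φ).SE := Iff.rfl

/-- From equality of SE-functions, candidate world views of unions transfer. -/
lemma SEfun_cwv_transfer {A : Set V} {E : Set (Lit V)} {R R' : Set (ERule V)}
    (hwf : (ELP.mk A E R).wf) (hwf' : (ELP.mk A E R').wf)
    (hfun : ∀ Φ, (ELP.mk A E R).SEfun Φ = (ELP.mk A E R').SEfun Φ)
    (Q : ELP V) {Φ : Set (Lit V)} {M : Set (Set V)}
    (h : ((ELP.mk A E R).union Q).isCWVwrt Φ M) :
    ((ELP.mk A E R').union Q).isCWVwrt Φ M := by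
  set Pa := ELP.mk A E R with hPa
  set Pb := ELP.mk A E R' with hPb
  have hreal : Pa.realizable (Φ ∩ E) := isCWVwrt_realizable hwf h
  obtain ⟨I', hI'sub, hne, _, _⟩ := hreal
  obtain ⟨J₀, hJ₀⟩ := hne
  obtain ⟨hJA, hJmod⟩ := hI'sub hJ₀
  have hpair : (J₀, J₀) ∈ (Pa.eReduct (Φ ∩ E)).SE :=
    ⟨subset_refl _, hJA, hJmod, Program.model_iff_redModel_self.mp hJmod⟩
  have hmem : (J₀, J₀) ∈ Pa.SEfun (Φ ∩ E) := ⟨isCWVwrt_realizable hwf h, hpair⟩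
  have hmem' : (J₀, J₀) ∈ Pb.SEfun (Φ ∩ E) :=
    (Set.ext_iff.mp (hfun (Φ ∩ E)) _).mp hmem
  have hrealb : Pb.realizable (Φ ∩ E) := hmem'.1
  have hse : (Pa.eReduct (Φ ∩ E)).SE = (Pb.eReduct (Φ ∩ E)).SE := by
    ext p
    constructor
    · intro hp
      exact ((Set.ext_iff.mp (hfun (Φ ∩ E)) p).mp ⟨isCWVwrt_realizable hwf h, hp⟩).2
    · intro hp
      exact ((Set.ext_iff.mp (hfun (Φ ∩ E)) p).mpr ⟨hrealb, hp⟩).2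
  have hseΦ : (Pa.eReduct Φ).SE = (Pb.eReduct Φ).SE := by
    rw [ELP.eReduct_inter hwf Φ, ELP.eReduct_inter hwf' Φ]
    exact hse
  have hAS : ((Pa.eReduct Φ).union (Q.eReduct Φ)).AS
      = ((Pb.eReduct Φ).union (Q.eReduct Φ)).AS :=
    AS_transfer (B := A) rfl rfl (ELP.eReduct_wf hwf Φ) (ELP.eReduct_wf hwf' Φ) hseΦ
  obtain ⟨hΦE, hMAS, hcomp⟩ := h
  refine ⟨hΦE, ?_, hcomp⟩
  rw [ELP.eReduct_union, ← hAS, ← ELP.eReduct_union]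
  exact hMAS

lemma SEfun_to_strongELPCWVEq {A : Set V} {E : Set (Lit V)} {R₁ R₂ : Set (ERule V)}
    (hwf₁ : (ELP.mk A E R₁).wf) (hwf₂ : (ELP.mk A E R₂).wf)
    (h : ∀ Φ, (ELP.mk A E R₁).SEfun Φ = (ELP.mk A E R₂).SEfun Φ) :
    ELP.strongELPCWVEq (ELP.mk A E R₁) (ELP.mk A E R₂) := by
  intro Q _ M
  constructor
  · rintro ⟨Φ, hΦ⟩
    exact ⟨Φ, SEfun_cwv_transfer hwf₁ hwf₂ h Q hΦ⟩
  · rintro ⟨Φ, hΦ⟩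
    exact ⟨Φ, SEfun_cwv_transfer hwf₂ hwf₁ (fun Φ => (h Φ).symm) Q hΦ⟩

end FiveToOne


section GuessShift

lemma ERule.reduct_head (r : ERule V) (Φ : Set (Lit V)) : (r.reduct Φ).head = r.head := rfl
lemma ERule.reduct_pos (r : ERule V) (Φ : Set (Lit V)) : (r.reduct Φ).pos = r.opos := rfl
lemma ERule.reduct_neg (r : ERule V) (Φ : Set (Lit V)) :
    (r.reduct Φ).neg = r.oneg ∪ (r.epos \ Φ) ∪ (Lit.flip '' r.eneg) := rfl

/-- Shifting the guess by literals violated by `Y` does not change the reduct's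
behaviour at `Y`. -/
lemma eReduct_shift_redModel (P : ELP V) {D : Set (Lit V)} {Y : Set V}
    (hD : ∀ ℓ ∈ D, ¬ ℓ.sat Y) (Φ : Set (Lit V)) (X : Set V) :
    (P.eReduct Φ).redModel Y X ↔ (P.eReduct (Φ ∪ D)).redModel Y X := by
  constructor
  · intro h q hq
    obtain ⟨r, hr, hc, rfl⟩ := hq
    have hcΦ : ∀ ℓ ∈ r.eneg, ℓ ∉ Φ := fun ℓ hℓ hΦ => hc ℓ hℓ (Or.inl hΦ)
    have hΦver : (r.reduct Φ).redSat Y X := h (r.reduct Φ) ⟨r, hr, hcΦ, rfl⟩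
    intro hguard hpos
    refine hΦver ?_ hpos
    intro m hm
    rcases hm with (hm | hm) | hm
    · exact hguard m (Or.inl (Or.inl hm))
    · by_cases hmD : m ∈ D
      · exact hD m hmD
      · exact hguard m (Or.inl (Or.inr ⟨hm.1, fun hx => hx.elim hm.2 hmD⟩))
    · exact hguard m (Or.inr hm)
  · intro h q hq
    obtain ⟨r, hr, hcΦ, rfl⟩ := hq
    by_cases hED : ∃ ℓ ∈ r.eneg, ℓ ∈ D
    · obtain ⟨ℓ, hℓe, hℓD⟩ := hED
      intro hguard _
      exact absurd (Lit.flip_sat.mpr (hD ℓ hℓD))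
        (hguard ℓ.flip (Or.inr ⟨ℓ, hℓe, rfl⟩))
    · push_neg at hED
      have hc : ∀ ℓ ∈ r.eneg, ℓ ∉ Φ ∪ D := by
        intro ℓ hℓ hx
        exact hx.elim (hcΦ ℓ hℓ) (hED ℓ hℓ)
      have hDver : (r.reduct (Φ ∪ D)).redSat Y X := h _ ⟨r, hr, hc, rfl⟩
      intro hguard hpos
      refine hDver ?_ hpos
      intro m hm
      rcases hm with (hm | hm) | hm
      · exact hguard m (Or.inl (Or.inl hm))
      · exact hguard m (Or.inl (Or.inr ⟨hm.1, fun hx => hm.2 (Or.inl hx)⟩))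
      · exact hguard m (Or.inr hm)

lemma eReduct_shift_model (P : ELP V) {D : Set (Lit V)} {Y : Set V}
    (hD : ∀ ℓ ∈ D, ¬ ℓ.sat Y) (Φ : Set (Lit V)) :
    (P.eReduct Φ).model Y ↔ (P.eReduct (Φ ∪ D)).model Y := by
  rw [Program.model_iff_redModel_self, Program.model_iff_redModel_self]
  exact eReduct_shift_redModel P hD Φ Y

lemma eReduct_shift_SE (P : ELP V) {D : Set (Lit V)} {X Y : Set V}
    (hD : ∀ ℓ ∈ D, ¬ ℓ.sat Y) (Φ : Set (Lit V)) :
    (X, Y) ∈ (P.eReduct Φ).SE ↔ (X, Y) ∈ (P.eReduct (Φ ∪ D)).SE := by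
  rw [Program.mem_SE, Program.mem_SE, ELP.eReduct_A, ELP.eReduct_A]
  rw [eReduct_shift_model P hD Φ, eReduct_shift_redModel P hD Φ X]

end GuessShift


section Context

/-- Negative body pattern fixing an interpretation on `A` to `Z`. -/
def patNeg (A Z : Set V) : Set (Lit V) := Lit.pos '' (A \ Z)

/-- A constraint forbidding the violation of `ℓ`. -/
def censorRule : Lit V → Rule V
  | .pos a => ⟨∅, ∅, {Lit.pos a}⟩
  | .neg a => ⟨∅, {a}, ∅⟩

/-- The context program used in the counterexample constructions. -/
def ctxRules (A : Set V) (s : V) (F : Set (Set V)) (X Y : Set V) (C : Set (Lit V)) :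
    Set (Rule V) :=
  {r | r = ⟨{s}, ∅, {Lit.neg s}⟩
    ∨ (∃ a ∈ A, r = ⟨{a}, ∅, {Lit.neg a, Lit.pos s}⟩)
    ∨ (∃ Z, Z ⊆ A ∧ Z ∉ F ∧ r = ⟨∅, Z, insert (Lit.pos s) (patNeg A Z)⟩)
    ∨ (∃ a ∈ X, r = ⟨{a}, {s}, ∅⟩)
    ∨ (∃ a ∈ Y \ X, ∃ b ∈ Y \ X, r = ⟨{a}, {b, s}, ∅⟩)
    ∨ (∃ Z, Z ⊆ A ∧ Z ≠ Y ∧ r = ⟨∅, insert s Z, patNeg A Z⟩)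
    ∨ (∃ ℓ ∈ C, r = censorRule ℓ)}

def ctxProg (A : Set V) (s : V) (F : Set (Set V)) (X Y : Set V) (C : Set (Lit V)) :
    Program V := ⟨insert s A, ctxRules A s F X Y C⟩

def ctxELP (A : Set V) (s : V) (F : Set (Set V)) (X Y : Set V) (C : Set (Lit V)) :
    ELP V := ⟨insert s A, ∅, Rule.toERule '' ctxRules A s F X Y C⟩

lemma Rule.toERule_wf {r : Rule V} {A : Set V} {E : Set (Lit V)} (h : r.wf A) :
    (r.toERule).wf A E :=
  ⟨h.1, h.2.1, h.2.2, Set.empty_subset E, Set.empty_subset E⟩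

lemma ctxRules_wf {A : Set V} {s : V} {F : Set (Set V)} {X Y : Set V} {C : Set (Lit V)}
    (hXA : X ⊆ A) (hYA : Y ⊆ A) (hCA : ∀ ℓ ∈ C, ℓ.atom ∈ A) :
    ∀ r ∈ ctxRules A s F X Y C, r.wf (insert s A) := by
  rintro r (rfl | ⟨a, ha, rfl⟩ | ⟨Z, hZA, _, rfl⟩ | ⟨a, ha, rfl⟩ |
    ⟨a, ha, b, hb, rfl⟩ | ⟨Z, hZA, _, rfl⟩ | ⟨ℓ, hℓ, rfl⟩)
  · exact ⟨by simp, by simp, by rintro ℓ rfl; simp⟩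
  · refine ⟨by simp [Set.mem_insert_iff, Or.inr ha], by simp, ?_⟩
    rintro ℓ (rfl | rfl)
    · simp [Set.mem_insert_iff, Or.inr ha]
    · simp
  · refine ⟨by simp, hZA.trans (Set.subset_insert s A), ?_⟩
    rintro ℓ (rfl | ⟨b, hb, rfl⟩)
    · simp
    · simp [Set.mem_insert_iff, Or.inr hb.1]
  · refine ⟨by simp [Set.mem_insert_iff, Or.inr (hXA ha)], by simp, ?_⟩
    rintro ℓ hℓ
    exact absurd hℓ (Set.notMem_empty ℓ)
  · refine ⟨by simp [Set.mem_insert_iff, Or.inr (hYA ha.1)], ?_, ?_⟩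
    · rintro x (rfl | rfl)
      · exact Set.mem_insert_iff.mpr (Or.inr (hYA hb.1))
      · exact Set.mem_insert _ _
    · rintro ℓ hℓ
      exact absurd hℓ (Set.notMem_empty ℓ)
  · refine ⟨by simp, ?_, ?_⟩
    · rintro x (rfl | hx)
      · exact Set.mem_insert _ _
      · exact Set.mem_insert_iff.mpr (Or.inr (hZA hx))
    · rintro ℓ ⟨b, hb, rfl⟩
      simp [Set.mem_insert_iff, Or.inr hb.1]
  · cases ℓ with
    | pos a =>
      refine ⟨Set.empty_subset _, Set.empty_subset _, ?_⟩
      rintro m rfl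
      exact Set.mem_insert_iff.mpr (Or.inr (hCA _ hℓ))
    | neg a =>
      refine ⟨Set.empty_subset _, ?_, ?_⟩
      · rintro x rfl
        exact Set.mem_insert_iff.mpr (Or.inr (hCA _ hℓ))
      · rintro m hm
        exact absurd hm (Set.notMem_empty m)

lemma ctxELP_wf {A : Set V} {s : V} {F : Set (Set V)} {X Y : Set V} {C : Set (Lit V)}
    (hXA : X ⊆ A) (hYA : Y ⊆ A) (hCA : ∀ ℓ ∈ C, ℓ.atom ∈ A) :
    (ctxELP A s F X Y C).wf := by
  constructor
  · rintro ℓ hℓ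
    exact absurd hℓ (Set.notMem_empty ℓ)
  · rintro r ⟨r₀, hr₀, rfl⟩
    exact Rule.toERule_wf (ctxRules_wf hXA hYA hCA r₀ hr₀)

lemma ctxELP_isASP {A : Set V} {s : V} {F : Set (Set V)} {X Y : Set V} {C : Set (Lit V)} :
    (ctxELP A s F X Y C).isASP := by
  refine ⟨rfl, ?_⟩
  rintro r ⟨r₀, _, rfl⟩
  exact ⟨rfl, rfl⟩

lemma ctxELP_eReduct {A : Set V} {s : V} {F : Set (Set V)} {X Y : Set V} {C : Set (Lit V)}
    (Ψ : Set (Lit V)) : (ctxELP A s F X Y C).eReduct Ψ = ctxProg A s F X Y C :=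
  ELP.eReduct_toERule_image _ _ _ Ψ

end Context


section CtxSat

variable {A : Set V} {s : V} {F : Set (Set V)} {X Y : Set V} {C : Set (Lit V)}

lemma mem_patNeg {Z : Set V} {b : V} (hb : b ∈ A) (hbZ : b ∉ Z) :
    Lit.pos b ∈ patNeg A Z := ⟨b, ⟨hb, hbZ⟩, rfl⟩

lemma insert_inter_of_not_mem {W : Set V} (hs : s ∉ A) (hW : W ⊆ A) :
    insert s W ∩ A = W := by
  ext x
  simp only [Set.mem_inter_iff, Set.mem_insert_iff]
  constructor
  · rintro ⟨rfl | hx, hxA⟩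
    · exact absurd hxA hs
    · exact hx
  · intro hx
    exact ⟨Or.inr hx, hW hx⟩

lemma ctx_sat_F (hs : s ∉ A) {J : Set V} (hJA : J ⊆ A) (hJF : J ∈ F)
    (hJC : ∀ ℓ ∈ C, ℓ.sat J) : ∀ r ∈ ctxRules A s F X Y C, r.sat J := by
  have hsJ : s ∉ J := fun h => hs (hJA h)
  rintro r (rfl | ⟨a, ha, rfl⟩ | ⟨Z, hZA, hZF, rfl⟩ | ⟨a, ha, rfl⟩ |
    ⟨a, ha, b, hb, rfl⟩ | ⟨Z, hZA, hZY, rfl⟩ | ⟨ℓ, hℓ, rfl⟩) <;> rintro ⟨hpos, hneg⟩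
  · exact absurd hsJ (hneg (Lit.neg s) rfl)
  · exact ⟨a, rfl, not_not.mp (hneg (Lit.neg a) (Set.mem_insert _ _))⟩
  · exfalso
    have hJZ : J ⊆ Z := by
      intro x hx
      by_contra hxZ
      exact hneg (Lit.pos x) (Set.mem_insert_of_mem _ (mem_patNeg (hJA hx) hxZ)) hx
    have hZJ : Z = J := subset_antisymm hpos hJZ
    rw [hZJ] at hZF
    exact hZF hJF
  · exact absurd (hpos rfl) hsJ
  · exact absurd (hpos (Set.mem_insert_of_mem _ rfl)) hsJ
  · exact absurd (hpos (Set.mem_insert _ _)) hsJ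
  · cases ℓ with
    | pos a => exact absurd (hJC _ hℓ) (hneg (Lit.pos a) rfl)
    | neg a => exact absurd (hpos rfl) (hJC _ hℓ)

lemma ctx_sat_W (hs : s ∉ A) (hXY : X ⊆ Y) (hYA : Y ⊆ A)
    (hYC : ∀ ℓ ∈ C, ℓ.sat Y) (hCA : ∀ ℓ ∈ C, ℓ.atom ∈ A) :
    ∀ r ∈ ctxRules A s F X Y C, r.sat (insert s Y) := by
  rintro r (rfl | ⟨a, ha, rfl⟩ | ⟨Z, hZA, hZF, rfl⟩ | ⟨a, ha, rfl⟩ |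
    ⟨a, ha, b, hb, rfl⟩ | ⟨Z, hZA, hZY, rfl⟩ | ⟨ℓ, hℓ, rfl⟩) <;> rintro ⟨hpos, hneg⟩
  · exact ⟨s, rfl, Set.mem_insert _ _⟩
  · exact absurd (Set.mem_insert _ _) (hneg (Lit.pos s) (Set.mem_insert_of_mem _ rfl))
  · exact absurd (Set.mem_insert _ _) (hneg (Lit.pos s) (Set.mem_insert _ _))
  · exact ⟨a, rfl, Set.mem_insert_of_mem _ (hXY ha)⟩
  · exact ⟨a, rfl, Set.mem_insert_of_mem _ ha.1⟩
  · exfalso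
    apply hZY
    have h1 : Z ⊆ Y := by
      intro z hz
      rcases hpos (Set.mem_insert_of_mem _ hz) with h | h
      · exact absurd (hZA hz) (h ▸ hs)
      · exact h
    have h2 : Y ⊆ Z := by
      intro y hy
      by_contra hyZ
      exact hneg (Lit.pos y) (mem_patNeg (hYA hy) hyZ) (Set.mem_insert_of_mem _ hy)
    exact subset_antisymm h1 h2
  · cases ℓ with
    | pos a =>
      exact absurd (show Lit.sat (insert s Y) (Lit.pos a) from
        Set.mem_insert_of_mem s (hYC _ hℓ)) (hneg (Lit.pos a) rfl)
    | neg a =>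
      rcases hpos rfl with h | h
      · exact absurd (hCA _ hℓ) (h ▸ hs)
      · exact absurd h (hYC _ hℓ)

lemma ctx_red_W (hs : s ∉ A) (hXY : X ⊆ Y) (hYA : Y ⊆ A)
    (hYC : ∀ ℓ ∈ C, ℓ.sat Y) (hCA : ∀ ℓ ∈ C, ℓ.atom ∈ A) :
    ∀ r ∈ ctxRules A s F X Y C, r.redSat (insert s Y) (insert s X) := by
  rintro r (rfl | ⟨a, ha, rfl⟩ | ⟨Z, hZA, hZF, rfl⟩ | ⟨a, ha, rfl⟩ |
    ⟨a, ha, b, hb, rfl⟩ | ⟨Z, hZA, hZY, rfl⟩ | ⟨ℓ, hℓ, rfl⟩) <;> intro hguard hpos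
  · exact ⟨s, rfl, Set.mem_insert _ _⟩
  · exact absurd (Set.mem_insert _ _) (hguard (Lit.pos s) (Set.mem_insert_of_mem _ rfl))
  · exact absurd (Set.mem_insert _ _) (hguard (Lit.pos s) (Set.mem_insert _ _))
  · exact ⟨a, rfl, Set.mem_insert_of_mem _ ha⟩
  · exfalso
    rcases hpos (Set.mem_insert _ _) with h | h
    · exact (h ▸ hs) (hYA hb.1)
    · exact hb.2 h
  · exfalso
    apply hZY
    have h2 : Y ⊆ Z := by
      intro y hy
      by_contra hyZ
      exact hguard (Lit.pos y) (mem_patNeg (hYA hy) hyZ) (Set.mem_insert_of_mem _ hy)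
    have h1 : Z ⊆ Y := by
      intro z hz
      rcases hpos (Set.mem_insert_of_mem _ hz) with h | h
      · exact absurd (hZA hz) (h ▸ hs)
      · exact hXY h
    exact subset_antisymm h1 h2
  · cases ℓ with
    | pos a =>
      exact absurd (show Lit.sat (insert s Y) (Lit.pos a) from
        Set.mem_insert_of_mem s (hYC _ hℓ)) (hguard (Lit.pos a) rfl)
    | neg a =>
      exfalso
      rcases hpos rfl with h | h
      · exact (h ▸ hs) (hCA _ hℓ)
      · exact (hYC _ hℓ) (hXY h)

end CtxSat


section CtxAS

variable {A : Set V} {s : V} {F : Set (Set V)} {X Y : Set V} {C : Set (Lit V)}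

lemma mem_ctx1 : (⟨{s}, ∅, {Lit.neg s}⟩ : Rule V) ∈ ctxRules A s F X Y C := Or.inl rfl
lemma mem_ctx2 {a : V} (ha : a ∈ A) :
    (⟨{a}, ∅, {Lit.neg a, Lit.pos s}⟩ : Rule V) ∈ ctxRules A s F X Y C :=
  Or.inr (Or.inl ⟨a, ha, rfl⟩)
lemma mem_ctx3 {Z : Set V} (hZA : Z ⊆ A) (hZF : Z ∉ F) :
    (⟨∅, Z, insert (Lit.pos s) (patNeg A Z)⟩ : Rule V) ∈ ctxRules A s F X Y C :=
  Or.inr (Or.inr (Or.inl ⟨Z, hZA, hZF, rfl⟩))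
lemma mem_ctx4 {a : V} (ha : a ∈ X) :
    (⟨{a}, {s}, ∅⟩ : Rule V) ∈ ctxRules A s F X Y C :=
  Or.inr (Or.inr (Or.inr (Or.inl ⟨a, ha, rfl⟩)))
lemma mem_ctx5 {a b : V} (ha : a ∈ Y \ X) (hb : b ∈ Y \ X) :
    (⟨{a}, {b, s}, ∅⟩ : Rule V) ∈ ctxRules A s F X Y C :=
  Or.inr (Or.inr (Or.inr (Or.inr (Or.inl ⟨a, ha, b, hb, rfl⟩))))
lemma mem_ctx6 {Z : Set V} (hZA : Z ⊆ A) (hZY : Z ≠ Y) :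
    (⟨∅, insert s Z, patNeg A Z⟩ : Rule V) ∈ ctxRules A s F X Y C :=
  Or.inr (Or.inr (Or.inr (Or.inr (Or.inr (Or.inl ⟨Z, hZA, hZY, rfl⟩)))))

/-- The answer sets of `G ∪ ctx`. -/
lemma ctx_AS {G : Program V}
    (hs : s ∉ A) (hGA : G.A = A) (hGwf : G.wf)
    (hF : ∀ J ∈ F, J ⊆ A)
    (hFC : ∀ J ∈ F, ∀ ℓ ∈ C, ℓ.sat J)
    (hYC : ∀ ℓ ∈ C, ℓ.sat Y) (hCA : ∀ ℓ ∈ C, ℓ.atom ∈ A)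
    (hXY : X ⊆ Y) (hYA : Y ⊆ A) :
    (G.union (ctxProg A s F X Y C)).AS
      = {J | J ∈ F ∧ G.model J}
        ∪ {W | W = insert s Y ∧ G.model Y ∧ (X = Y ∨ ¬ G.redModel Y X)} := by
  have hXA : X ⊆ A := hXY.trans hYA
  have hUA : (G.union (ctxProg A s F X Y C)).A = insert s A := by
    show G.A ∪ insert s A = insert s A
    rw [hGA, Set.union_insert, Set.union_self]
  have hWint : insert s Y ∩ A = Y ∩ A := by
    rw [insert_inter_of_not_mem hs hYA, Set.inter_eq_self_of_subset_left hYA]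
  have hXint : insert s X ∩ A = X ∩ A := by
    rw [insert_inter_of_not_mem hs hXA, Set.inter_eq_self_of_subset_left hXA]
  ext M
  simp only [Set.mem_union, Set.mem_setOf_eq]
  constructor
  · intro hM
    obtain ⟨hMA, hmod, hmin⟩ := hM
    rw [hUA] at hMA
    have hmodG : G.model M := fun r hr => hmod r (Or.inl hr)
    have hmodC : ∀ r ∈ ctxRules A s F X Y C, r.sat M := fun r hr => hmod r (Or.inr hr)
    by_cases hsM : s ∈ M
    · -- the branch interpretation
      have hMAY : M ∩ A = Y := by
        by_contra hne
        have h1 : insert s (M ∩ A) ⊆ M :=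
          Set.insert_subset_iff.mpr ⟨hsM, Set.inter_subset_left⟩
        have h2 : ∀ ℓ ∈ patNeg A (M ∩ A), ¬ ℓ.sat M := by
          rintro ℓ ⟨b, hb, rfl⟩
          exact fun hbM => hb.2 ⟨hbM, hb.1⟩
        obtain ⟨x, hx, -⟩ := hmodC _ (mem_ctx6 Set.inter_subset_right hne) ⟨h1, h2⟩
        exact absurd hx (Set.notMem_empty x)
      have hMY : M = insert s Y := by
        ext x
        constructor
        · intro hx
          rcases hMA hx with rfl | hxA
          · exact Set.mem_insert _ _
          · exact Set.mem_insert_of_mem _ (hMAY ▸ (⟨hx, hxA⟩ : x ∈ M ∩ A))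
        · rintro (rfl | hx)
          · exact hsM
          · exact (Set.ext_iff.mp hMAY x).mpr hx |>.1
      subst hMY
      have hmodY : G.model Y := (Program.model_congr hGwf hGA hWint).mp hmodG
      refine Or.inr ⟨rfl, hmodY, ?_⟩
      by_cases hXeq : X = Y
      · exact Or.inl hXeq
      right
      intro hred
      apply hmin
      refine ⟨insert s X, ?_, ?_⟩
      · rw [ssubset_iff_subset_ne]
        refine ⟨Set.insert_subset_insert hXY, ?_⟩
        intro hEq
        obtain ⟨y, hyY, hyX⟩ := Set.exists_of_ssubset (ssubset_iff_subset_ne.mpr ⟨hXY, hXeq⟩)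
        have : y ∈ insert s X := hEq ▸ Set.mem_insert_of_mem _ hyY
        rcases this with rfl | h
        · exact hs (hYA hyY)
        · exact hyX h
      · have hredG : G.redModel (insert s Y) (insert s X) :=
          (Program.redModel_congr hGwf hGA hWint hXint).mpr hred
        rintro r (hr | hr)
        · exact hredG r hr
        · exact ctx_red_W hs hXY hYA hYC hCA r hr
    · -- a family interpretation
      have hMsubA : M ⊆ A := by
        intro x hx
        rcases hMA hx with rfl | h
        · exact absurd hx hsM
        · exact h
      have hMF : M ∈ F := by
        by_contra hMF
        have h2 : ∀ ℓ ∈ insert (Lit.pos s) (patNeg A M), ¬ ℓ.sat M := by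
          rintro ℓ (rfl | ⟨b, hb, rfl⟩)
          · exact hsM
          · exact fun hbM => hb.2 hbM
        obtain ⟨x, hx, -⟩ := hmodC _ (mem_ctx3 hMsubA hMF) ⟨subset_rfl, h2⟩
        exact absurd hx (Set.notMem_empty x)
      exact Or.inl ⟨hMF, hmodG⟩
  · rintro (⟨hJF, hJmod⟩ | ⟨rfl, hYmod, halt⟩)
    · -- family interpretations are answer sets
      have hJA : M ⊆ A := hF M hJF
      have hsJ : s ∉ M := fun h => hs (hJA h)
      refine ⟨?_, ?_, ?_⟩
      · rw [hUA]
        exact hJA.trans (Set.subset_insert s A)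
      · rintro r (hr | hr)
        · exact hJmod r hr
        · exact ctx_sat_F hs hJA hJF (hFC M hJF) r hr
      · rintro ⟨M', hlt, hred⟩
        have hsub : M ⊆ M' := by
          intro a ha
          have hg : ∀ ℓ ∈ ({Lit.neg a, Lit.pos s} : Set (Lit V)), ¬ ℓ.sat M := by
            rintro ℓ (rfl | rfl)
            · exact not_not.mpr ha
            · exact hsJ
          obtain ⟨x, hx, hxM'⟩ := hred _ (Or.inr (mem_ctx2 (hJA ha))) hg (Set.empty_subset M')
          rcases hx with rfl
          exact hxM'
        exact (ssubset_iff_subset_ne.mp hlt).2 (subset_antisymm hlt.subset hsub)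
    · -- the branch interpretation is an answer set when minimality cannot fail
      refine ⟨?_, ?_, ?_⟩
      · rw [hUA]
        exact Set.insert_subset_insert hYA
      · rintro r (hr | hr)
        · exact (Program.model_congr hGwf hGA hWint).mpr hYmod r hr
        · exact ctx_sat_W hs hXY hYA hYC hCA r hr
      · rintro ⟨M', hlt, hred⟩
        have hredC : ∀ r ∈ ctxRules A s F X Y C, r.redSat (insert s Y) M' :=
          fun r hr => hred r (Or.inr hr)
        have hsM' : s ∈ M' := by
          have hg : ∀ ℓ ∈ ({Lit.neg s} : Set (Lit V)), ¬ ℓ.sat (insert s Y) := by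
            rintro ℓ rfl
            exact not_not.mpr (Set.mem_insert _ _)
          obtain ⟨x, hx, hxM'⟩ := hredC _ mem_ctx1 hg (Set.empty_subset M')
          rcases hx with rfl
          exact hxM'
        have hXM' : X ⊆ M' := by
          intro a ha
          obtain ⟨x, hx, hxM'⟩ := hredC _ (mem_ctx4 ha)
            (fun ℓ hℓ => absurd hℓ (Set.notMem_empty ℓ))
            (Set.singleton_subset_iff.mpr hsM')
          rcases hx with rfl
          exact hxM'
        by_cases hbM : ∃ b, b ∈ M' ∧ b ∈ Y \ X
        · obtain ⟨b, hbM', hbYX⟩ := hbM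
          have hYXM' : ∀ a ∈ Y \ X, a ∈ M' := by
            intro a ha
            obtain ⟨x, hx, hxM'⟩ := hredC _ (mem_ctx5 ha hbYX)
              (fun ℓ hℓ => absurd hℓ (Set.notMem_empty ℓ))
              (by
                rintro x (rfl | rfl)
                · exact hbM'
                · exact hsM')
            rcases hx with rfl
            exact hxM'
          have hWM' : insert s Y ⊆ M' := by
            rintro x (rfl | hxY)
            · exact hsM'
            · by_cases hxX : x ∈ X
              · exact hXM' hxX
              · exact hYXM' x ⟨hxY, hxX⟩
          exact (ssubset_iff_subset_ne.mp hlt).2 (subset_antisymm hlt.subset hWM')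
        · push_neg at hbM
          have hM'A : M' ∩ A = X := by
            ext x
            constructor
            · rintro ⟨hxM', hxA⟩
              rcases hlt.subset hxM' with rfl | hxY
              · exact absurd hxA hs
              · by_contra hxX
                exact hbM x hxM' ⟨hxY, hxX⟩
            · intro hx
              exact ⟨hXM' hx, hXA hx⟩
          have hM'int : M' ∩ A = X ∩ A := by
            rw [hM'A, Set.inter_eq_self_of_subset_left hXA]
          rcases halt with rfl | hnred
          · exact (ssubset_iff_subset_ne.mp hlt).2
              (subset_antisymm hlt.subset (Set.insert_subset_iff.mpr ⟨hsM', hXM'⟩))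
          · apply hnred
            have hredG : G.redModel (insert s Y) M' := fun r hr => hred r (Or.inl hr)
            exact (Program.redModel_congr hGwf hGA hWint hM'int).mp hredG

end CtxAS


section SideLemmas

/-- The literals of `E` outside `Φ` violated by `Y`. -/
def viol (E Φ : Set (Lit V)) (Y : Set V) : Set (Lit V) :=
  {ℓ | ℓ ∈ E ∧ ℓ ∉ Φ ∧ ¬ ℓ.sat Y}

variable {A : Set V} {E : Set (Lit V)} {s : V} {F : Set (Set V)} {X Y : Set V}
  {C : Set (Lit V)}

lemma ctx_union_AS (P : ELP V) (hPA : P.A = A) (hPwf : P.wf)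
    (hs : s ∉ A)
    (hF : ∀ J ∈ F, J ⊆ A)
    (hFC : ∀ J ∈ F, ∀ ℓ ∈ C, ℓ.sat J)
    (hYC : ∀ ℓ ∈ C, ℓ.sat Y) (hCA : ∀ ℓ ∈ C, ℓ.atom ∈ A)
    (hXY : X ⊆ Y) (hYA : Y ⊆ A) (Ψ : Set (Lit V)) :
    ((P.union (ctxELP A s F X Y C)).eReduct Ψ).AS
      = {J | J ∈ F ∧ (P.eReduct Ψ).model J}
        ∪ {W | W = insert s Y ∧ (P.eReduct Ψ).model Y ∧
            (X = Y ∨ ¬ (P.eReduct Ψ).redModel Y X)} := by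
  rw [ELP.eReduct_union, ctxELP_eReduct]
  exact ctx_AS hs (by rw [ELP.eReduct_A, hPA]) (ELP.eReduct_wf hPwf Ψ)
    hF hFC hYC hCA hXY hYA

lemma ctx_union_E (P : ELP V) (hPE : P.E = E) :
    (P.union (ctxELP A s F X Y C)).E = E := by
  show P.E ∪ ∅ = E
  rw [hPE, Set.union_empty]

/-- Candidate world views of `P ∪ ctx` w.r.t. guesses strictly above `Φ` force
the branch interpretation and pin down the guess. -/
lemma ctx_no_big_cwv (P : ELP V) {Φ Ψ : Set (Lit V)} {M : Set (Set V)}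
    (hPA : P.A = A) (hPE : P.E = E) (hPwf : P.wf) (hs : s ∉ A)
    (hE_atoms : ∀ ℓ ∈ E, ℓ.atom ∈ A)
    (hF : ∀ J ∈ F, J ⊆ A) (hFE : ∀ J ∈ F, ∀ ℓ, ℓ ∈ E → ℓ ∉ Φ → ℓ.sat J)
    (hXY : X ⊆ Y) (hYA : Y ⊆ A)
    (hcwv : (P.union (ctxELP A s F X Y ∅)).isCWVwrt Ψ M) (hbig : Φ ⊂ Ψ) :
    Ψ = Φ ∪ viol E Φ Y ∧ P.realizable Ψ := by
  have hreal : P.realizable (Ψ ∩ P.E) := isCWVwrt_realizable hPwf hcwv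
  obtain ⟨hΨE', hMAS, hcomp⟩ := hcwv
  have hΨE : Ψ ⊆ E := (ctx_union_E (C := ∅) P hPE) ▸ hΨE'
  have hWint : insert s Y ∩ A = Y ∩ A := by
    rw [insert_inter_of_not_mem hs hYA, Set.inter_eq_self_of_subset_left hYA]
  have hWsat : ∀ ℓ ∈ E, (ℓ.sat (insert s Y) ↔ ℓ.sat Y) := fun ℓ hℓ =>
    Lit.sat_congr (hE_atoms ℓ hℓ) hWint
  rw [ctx_union_AS (C := ∅) P hPA hPwf hs hF (fun J _ ℓ hℓ => absurd hℓ (Set.notMem_empty ℓ))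
    (fun ℓ hℓ => absurd hℓ (Set.notMem_empty ℓ))
    (fun ℓ hℓ => absurd hℓ (Set.notMem_empty ℓ)) hXY hYA Ψ] at hMAS
  have hwit : ∀ ℓ, ℓ ∈ Ψ → ℓ ∉ Φ → (ℓ ∈ viol E Φ Y ∧ insert s Y ∈ M) := by
    intro ℓ hℓΨ hℓΦ
    obtain ⟨J, hJ, hns⟩ := hcomp.2.1 ℓ hℓΨ
    have hJM : J ∈ _ := hMAS ▸ hJ
    rcases hJM with ⟨hJF, -⟩ | ⟨hJeq, -, -⟩
    · exact absurd (hFE J hJF ℓ (hΨE hℓΨ) hℓΦ) hns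
    · subst hJeq
      exact ⟨⟨hΨE hℓΨ, hℓΦ, fun hy => hns ((hWsat ℓ (hΨE hℓΨ)).mpr hy)⟩, hJ⟩
  obtain ⟨ℓ₀, hℓ₀Ψ, hℓ₀Φ⟩ := Set.exists_of_ssubset hbig
  have hbranch : insert s Y ∈ M := (hwit ℓ₀ hℓ₀Ψ hℓ₀Φ).2
  constructor
  · apply subset_antisymm
    · intro ℓ hℓ
      by_cases hℓΦ : ℓ ∈ Φ
      · exact Or.inl hℓΦ
      · exact Or.inr (hwit ℓ hℓ hℓΦ).1
    · rintro ℓ (hℓ | hℓ)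
      · exact hbig.subset hℓ
      · by_contra hℓΨ
        have hsatW : ℓ.sat (insert s Y) := hcomp.2.2 ℓ
          ⟨(ctx_union_E (C := ∅) P hPE).symm ▸ hℓ.1, hℓΨ⟩ (insert s Y) hbranch
        exact hℓ.2.2 ((hWsat ℓ hℓ.1).mp hsatW)
  · have hΨint : Ψ ∩ P.E = Ψ := by
      rw [hPE]
      exact Set.inter_eq_left.mpr hΨE
    rwa [hΨint] at hreal

/-- Realizing families of interpretations transfer under strong WV-equivalence. -/
lemma side_real (P P' : ELP V)
    (hPA : P.A = A) (hPE : P.E = E) (hPwf : P.wf)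
    (hP'A : P'.A = A) (hP'E : P'.E = E) (hP'wf : P'.wf)
    (hs : s ∉ A) (hE_atoms : ∀ ℓ ∈ E, ℓ.atom ∈ A)
    (hH : ∀ Q : ELP V, Q.wf → Q.isASP → (P.union Q).wvEq (P'.union Q))
    {Φ : Set (Lit V)} (hΦE : Φ ⊆ E) {I' : Set (Set V)}
    (hI' : ∀ J ∈ I', J ⊆ A ∧ (P.eReduct Φ).model J)
    (hcomp : compatible E Φ I') :
    ∀ J ∈ I', (P'.eReduct Φ).model J := by
  obtain ⟨hne, h2, h3⟩ := hcomp
  obtain ⟨J₀, hJ₀⟩ := hne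
  have hJ₀A : J₀ ⊆ A := (hI' J₀ hJ₀).1
  have hJ₀E : ∀ ℓ, ℓ ∈ E → ℓ ∉ Φ → ℓ.sat J₀ := fun ℓ h1 h2' => h3 ℓ ⟨h1, h2'⟩ J₀ hJ₀
  have hFh : ∀ J ∈ I', J ⊆ A := fun J hJ => (hI' J hJ).1
  have hFE : ∀ J ∈ I', ∀ ℓ, ℓ ∈ E → ℓ ∉ Φ → ℓ.sat J :=
    fun J hJ ℓ h1 h2' => h3 ℓ ⟨h1, h2'⟩ J hJ
  set Qc : ELP V := ctxELP A s I' J₀ J₀ ∅ with hQc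
  have hQwf : Qc.wf := ctxELP_wf hJ₀A hJ₀A
    (fun ℓ hℓ => absurd hℓ (Set.notMem_empty ℓ))
  have hceq : ∀ (R : ELP V), R.A = A → R.wf →
      ((R.union Qc).eReduct Φ).AS
        = {J | J ∈ I' ∧ (R.eReduct Φ).model J}
          ∪ {W | W = insert s J₀ ∧ (R.eReduct Φ).model J₀ ∧
              (J₀ = J₀ ∨ ¬ (R.eReduct Φ).redModel J₀ J₀)} := by
    intro R hRA hRwf
    exact ctx_union_AS (C := ∅) R hRA hRwf hs hFh
      (fun J _ ℓ hℓ => absurd hℓ (Set.notMem_empty ℓ))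
      (fun ℓ hℓ => absurd hℓ (Set.notMem_empty ℓ))
      (fun ℓ hℓ => absurd hℓ (Set.notMem_empty ℓ)) (subset_refl J₀) hJ₀A Φ
  have hWint : insert s J₀ ∩ A = J₀ ∩ A := by
    rw [insert_inter_of_not_mem hs hJ₀A, Set.inter_eq_self_of_subset_left hJ₀A]
  have hWsat : ∀ ℓ ∈ E, (ℓ.sat (insert s J₀) ↔ ℓ.sat J₀) := fun ℓ hℓ =>
    Lit.sat_congr (hE_atoms ℓ hℓ) hWint
  set M₀ : Set (Set V) := ((P.union Qc).eReduct Φ).AS with hM₀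
  have hM₀eq : M₀ = {J | J ∈ I' ∧ (P.eReduct Φ).model J}
      ∪ {W | W = insert s J₀ ∧ (P.eReduct Φ).model J₀ ∧
          (J₀ = J₀ ∨ ¬ (P.eReduct Φ).redModel J₀ J₀)} := hceq P hPA hPwf
  have hI'M₀ : ∀ J ∈ I', J ∈ M₀ := by
    intro J hJ
    rw [hM₀eq]
    exact Or.inl ⟨hJ, (hI' J hJ).2⟩
  have hcompM₀ : compatible ((P.union Qc).E) Φ M₀ := by
    rw [ctx_union_E (C := ∅) P hPE]
    refine ⟨⟨J₀, hI'M₀ J₀ hJ₀⟩, ?_, ?_⟩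
    · intro ℓ hℓ
      obtain ⟨J, hJ, hns⟩ := h2 ℓ hℓ
      exact ⟨J, hI'M₀ J hJ, hns⟩
    · intro ℓ hℓ J hJ
      rw [hM₀eq] at hJ
      rcases hJ with ⟨hJF, -⟩ | ⟨hJeq, -, -⟩
      · exact h3 ℓ hℓ J hJF
      · subst hJeq
        exact (hWsat ℓ hℓ.1).mpr (hJ₀E ℓ hℓ.1 hℓ.2)
  have hcwv : (P.union Qc).isCWVwrt Φ M₀ := by
    refine ⟨?_, rfl, hcompM₀⟩
    rw [ctx_union_E (C := ∅) P hPE]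
    exact hΦE
  have hwv : (P.union Qc).isWV M₀ := by
    refine ⟨Φ, hcwv, ?_⟩
    intro Φ' M' hcwv' hbig
    obtain ⟨hΨeq, -⟩ := ctx_no_big_cwv P hPA hPE hPwf hs hE_atoms hFh hFE
      (subset_refl J₀) hJ₀A hcwv' hbig
    have hviol : viol E Φ J₀ = ∅ := by
      ext ℓ
      simp only [viol, Set.mem_setOf_eq, Set.mem_empty_iff_false, iff_false, not_and]
      intro h1 h2'
      exact not_not.mpr (hJ₀E ℓ h1 h2')
    rw [hviol, Set.union_empty] at hΨeq
    exact hbig.ne hΨeq.symm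
  have hwv' : (P'.union Qc).isWV M₀ := (hH Qc hQwf ctxELP_isASP M₀).mp hwv
  obtain ⟨Φ', hcwv', -⟩ := hwv'
  have hΦ'eq : Φ' = Φ := by
    have e1 := isCWVwrt_guess_eq hcwv'
    have e2 := isCWVwrt_guess_eq hcwv
    rw [ctx_union_E (C := ∅) P' hP'E] at e1
    rw [ctx_union_E (C := ∅) P hPE] at e2
    rw [e1, ← e2]
  subst hΦ'eq
  have hM₀eq' : M₀ = {J | J ∈ I' ∧ (P'.eReduct Φ').model J}
      ∪ {W | W = insert s J₀ ∧ (P'.eReduct Φ').model J₀ ∧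
          (J₀ = J₀ ∨ ¬ (P'.eReduct Φ').redModel J₀ J₀)} := by
    rw [hcwv'.2.1]
    exact hceq P' hP'A hP'wf
  intro J hJ
  have hJM : J ∈ _ := hM₀eq' ▸ (hI'M₀ J hJ)
  rcases hJM with ⟨-, hmod⟩ | ⟨hJeq, -, -⟩
  · exact hmod
  · exfalso
    have : s ∈ J := hJeq ▸ Set.mem_insert s J₀
    exact hs ((hI' J hJ).1 this)

end SideLemmas


section SideAB

variable {A : Set V} {E : Set (Lit V)} {s : V}

/-- Transfer of modelhood of the reduct under strong WV-equivalence. -/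
lemma side_a (P P' : ELP V)
    (hPA : P.A = A) (hPE : P.E = E) (hPwf : P.wf)
    (hP'A : P'.A = A) (hP'E : P'.E = E) (hP'wf : P'.wf)
    (hs : s ∉ A) (hE_atoms : ∀ ℓ ∈ E, ℓ.atom ∈ A)
    (hH : ∀ Q : ELP V, Q.wf → Q.isASP → (P.union Q).wvEq (P'.union Q))
    {Φ : Set (Lit V)} (hΦE : Φ ⊆ E) {I' : Set (Set V)}
    (hI'A : ∀ J ∈ I', J ⊆ A)
    (hI'P' : ∀ J ∈ I', (P'.eReduct Φ).model J)
    (hcomp : compatible E Φ I')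
    {Y : Set V} (hYA : Y ⊆ A) (hYm : (P.eReduct Φ).model Y)
    (hblock : viol E Φ Y = ∅ ∨ ¬ P'.realizable (Φ ∪ viol E Φ Y)) :
    (P'.eReduct Φ).model Y := by
  by_contra hYm'
  obtain ⟨hne, h2, h3⟩ := hcomp
  have hFE : ∀ J ∈ I', ∀ ℓ, ℓ ∈ E → ℓ ∉ Φ → ℓ.sat J :=
    fun J hJ ℓ ha hb => h3 ℓ ⟨ha, hb⟩ J hJ
  set Qc : ELP V := ctxELP A s I' Y Y ∅ with hQc
  have hQwf : Qc.wf := ctxELP_wf hYA hYA (fun ℓ hℓ => absurd hℓ (Set.notMem_empty ℓ))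
  have hceq : ∀ (R : ELP V), R.A = A → R.wf → ∀ Ψ,
      ((R.union Qc).eReduct Ψ).AS
        = {J | J ∈ I' ∧ (R.eReduct Ψ).model J}
          ∪ {W | W = insert s Y ∧ (R.eReduct Ψ).model Y ∧
              (Y = Y ∨ ¬ (R.eReduct Ψ).redModel Y Y)} := by
    intro R hRA hRwf Ψ
    exact ctx_union_AS (C := ∅) R hRA hRwf hs hI'A
      (fun J _ ℓ hℓ => absurd hℓ (Set.notMem_empty ℓ))
      (fun ℓ hℓ => absurd hℓ (Set.notMem_empty ℓ))
      (fun ℓ hℓ => absurd hℓ (Set.notMem_empty ℓ)) (subset_refl Y) hYA Ψ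
  set M₀ : Set (Set V) := ((P'.union Qc).eReduct Φ).AS with hM₀
  have hM₀I : M₀ = I' := by
    rw [hM₀, hceq P' hP'A hP'wf Φ]
    ext K
    constructor
    · rintro (⟨hK, -⟩ | ⟨-, hm, -⟩)
      · exact hK
      · exact absurd hm hYm'
    · intro hK
      exact Or.inl ⟨hK, hI'P' K hK⟩
  have hcwv' : (P'.union Qc).isCWVwrt Φ M₀ := by
    refine ⟨?_, rfl, ?_⟩
    · rw [ctx_union_E (C := ∅) P' hP'E]
      exact hΦE
    · rw [ctx_union_E (C := ∅) P' hP'E, hM₀I]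
      exact ⟨hne, h2, h3⟩
  have hwv' : (P'.union Qc).isWV M₀ := by
    refine ⟨Φ, hcwv', ?_⟩
    intro Φ' M' hcwv'' hbig
    obtain ⟨hΨeq, hrealΨ⟩ := ctx_no_big_cwv P' hP'A hP'E hP'wf hs hE_atoms hI'A hFE
      (subset_refl Y) hYA hcwv'' hbig
    rcases hblock with hv | hnr
    · rw [hv, Set.union_empty] at hΨeq
      exact hbig.ne hΨeq.symm
    · exact hnr (hΨeq ▸ hrealΨ)
  have hwv : (P.union Qc).isWV M₀ := (hH Qc hQwf ctxELP_isASP M₀).mpr hwv'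
  obtain ⟨Φ'', hcwv'', -⟩ := hwv
  have hΦ''eq : Φ'' = Φ := by
    have e1 := isCWVwrt_guess_eq hcwv''
    have e2 := isCWVwrt_guess_eq hcwv'
    rw [ctx_union_E (C := ∅) P hPE] at e1
    rw [ctx_union_E (C := ∅) P' hP'E] at e2
    rw [e1, ← e2]
  subst hΦ''eq
  have hbr : insert s Y ∈ M₀ := by
    rw [hcwv''.2.1, hceq P hPA hPwf Φ'']
    exact Or.inr ⟨rfl, hYm, Or.inl rfl⟩
  rw [hM₀I] at hbr
  exact hs (hI'A _ hbr (Set.mem_insert s Y))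

/-- Transfer of reduct-modelhood under strong WV-equivalence. -/
lemma side_b (P P' : ELP V)
    (hPA : P.A = A) (hPE : P.E = E) (hPwf : P.wf)
    (hP'A : P'.A = A) (hP'E : P'.E = E) (hP'wf : P'.wf)
    (hs : s ∉ A) (hE_atoms : ∀ ℓ ∈ E, ℓ.atom ∈ A)
    (hH : ∀ Q : ELP V, Q.wf → Q.isASP → (P.union Q).wvEq (P'.union Q))
    {Φ : Set (Lit V)} (hΦE : Φ ⊆ E) {I' : Set (Set V)}
    (hI'A : ∀ J ∈ I', J ⊆ A)
    (hI'P : ∀ J ∈ I', (P.eReduct Φ).model J)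
    (hcomp : compatible E Φ I')
    {X Y : Set V} (hXY : X ⊆ Y) (hXne : X ≠ Y) (hYA : Y ⊆ A)
    (hYmP' : (P'.eReduct Φ).model Y)
    (hredP : (P.eReduct Φ).redModel Y X)
    (hblock : viol E Φ Y = ∅ ∨ ¬ P.realizable (Φ ∪ viol E Φ Y)) :
    (P'.eReduct Φ).redModel Y X := by
  by_contra hred'
  obtain ⟨hne, h2, h3⟩ := hcomp
  have hFE : ∀ J ∈ I', ∀ ℓ, ℓ ∈ E → ℓ ∉ Φ → ℓ.sat J :=
    fun J hJ ℓ ha hb => h3 ℓ ⟨ha, hb⟩ J hJ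
  set Qc : ELP V := ctxELP A s I' X Y ∅ with hQc
  have hQwf : Qc.wf := ctxELP_wf (hXY.trans hYA) hYA
    (fun ℓ hℓ => absurd hℓ (Set.notMem_empty ℓ))
  have hceq : ∀ (R : ELP V), R.A = A → R.wf → ∀ Ψ,
      ((R.union Qc).eReduct Ψ).AS
        = {J | J ∈ I' ∧ (R.eReduct Ψ).model J}
          ∪ {W | W = insert s Y ∧ (R.eReduct Ψ).model Y ∧
              (X = Y ∨ ¬ (R.eReduct Ψ).redModel Y X)} := by
    intro R hRA hRwf Ψ
    exact ctx_union_AS (C := ∅) R hRA hRwf hs hI'A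
      (fun J _ ℓ hℓ => absurd hℓ (Set.notMem_empty ℓ))
      (fun ℓ hℓ => absurd hℓ (Set.notMem_empty ℓ))
      (fun ℓ hℓ => absurd hℓ (Set.notMem_empty ℓ)) hXY hYA Ψ
  set M₀ : Set (Set V) := ((P.union Qc).eReduct Φ).AS with hM₀
  have hM₀I : M₀ = I' := by
    rw [hM₀, hceq P hPA hPwf Φ]
    ext K
    constructor
    · rintro (⟨hK, -⟩ | ⟨-, -, hcond⟩)
      · exact hK
      · rcases hcond with h | h
        · exact absurd h hXne
        · exact absurd hredP h
    · intro hK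
      exact Or.inl ⟨hK, hI'P K hK⟩
  have hcwv : (P.union Qc).isCWVwrt Φ M₀ := by
    refine ⟨?_, rfl, ?_⟩
    · rw [ctx_union_E (C := ∅) P hPE]
      exact hΦE
    · rw [ctx_union_E (C := ∅) P hPE, hM₀I]
      exact ⟨hne, h2, h3⟩
  have hwv : (P.union Qc).isWV M₀ := by
    refine ⟨Φ, hcwv, ?_⟩
    intro Φ' M' hcwv'' hbig
    obtain ⟨hΨeq, hrealΨ⟩ := ctx_no_big_cwv P hPA hPE hPwf hs hE_atoms hI'A hFE
      hXY hYA hcwv'' hbig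
    rcases hblock with hv | hnr
    · rw [hv, Set.union_empty] at hΨeq
      exact hbig.ne hΨeq.symm
    · exact hnr (hΨeq ▸ hrealΨ)
  have hwv' : (P'.union Qc).isWV M₀ := (hH Qc hQwf ctxELP_isASP M₀).mp hwv
  obtain ⟨Φ'', hcwv'', -⟩ := hwv'
  have hΦ''eq : Φ'' = Φ := by
    have e1 := isCWVwrt_guess_eq hcwv''
    have e2 := isCWVwrt_guess_eq hcwv
    rw [ctx_union_E (C := ∅) P' hP'E] at e1
    rw [ctx_union_E (C := ∅) P hPE] at e2
    rw [e1, ← e2]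
  subst hΦ''eq
  have hbr : insert s Y ∈ M₀ := by
    rw [hcwv''.2.1, hceq P' hP'A hP'wf Φ'']
    exact Or.inr ⟨rfl, hYmP', Or.inr hred'⟩
  rw [hM₀I] at hbr
  exact hs (hI'A _ hbr (Set.mem_insert s Y))

end SideAB


section Master

variable {A : Set V} {E : Set (Lit V)} {s : V}

lemma se_incl (P P' : ELP V)
    (hPA : P.A = A) (hPE : P.E = E) (hPwf : P.wf)
    (hP'A : P'.A = A) (hP'E : P'.E = E) (hP'wf : P'.wf)
    (hs : s ∉ A) (hE_atoms : ∀ ℓ ∈ E, ℓ.atom ∈ A)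
    (hH : ∀ Q : ELP V, Q.wf → Q.isASP → (P.union Q).wvEq (P'.union Q))
    {Φ : Set (Lit V)} (hΦE : Φ ⊆ E) {I' : Set (Set V)}
    (hI'A : ∀ J ∈ I', J ⊆ A)
    (hI'P : ∀ J ∈ I', (P.eReduct Φ).model J)
    (hI'P' : ∀ J ∈ I', (P'.eReduct Φ).model J)
    (hcomp : compatible E Φ I')
    (hIH : ∀ Ψ, Φ ⊂ Ψ → Ψ ⊆ E →
      ((P.realizable Ψ ↔ P'.realizable Ψ) ∧
       (P.realizable Ψ → (P.eReduct Ψ).SE = (P'.eReduct Ψ).SE))) :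
    (P.eReduct Φ).SE ⊆ (P'.eReduct Φ).SE := by
  rintro ⟨X, Y⟩ hp
  obtain ⟨hXYsub, hYA', hYm, hXred⟩ := Program.mem_SE.mp hp
  have hYA : Y ⊆ A := by rwa [ELP.eReduct_A, hPA] at hYA'
  set D := viol E Φ Y with hD
  have hDE : D ⊆ E := fun ℓ hℓ => hℓ.1
  have hDv : ∀ ℓ ∈ D, ¬ ℓ.sat Y := fun ℓ hℓ => hℓ.2.2
  have hbigD : D ≠ ∅ → Φ ⊂ Φ ∪ D := by
    intro hDem
    obtain ⟨ℓ₀, hℓ₀⟩ := Set.nonempty_iff_ne_empty.mpr hDem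
    refine ssubset_iff_subset_ne.mpr ⟨Set.subset_union_left, ?_⟩
    intro h
    have : ℓ₀ ∈ Φ := by rw [h]; exact Or.inr hℓ₀
    exact hℓ₀.2.1 this
  have hΦDE : Φ ∪ D ⊆ E := Set.union_subset hΦE hDE
  -- Step 1: Y is a model of the other reduct.
  have hYm' : (P'.eReduct Φ).model Y := by
    by_cases hDem : D = ∅
    · exact side_a P P' hPA hPE hPwf hP'A hP'E hP'wf hs hE_atoms hH hΦE hI'A hI'P'
        hcomp hYA hYm (Or.inl hDem)
    · by_cases hreal' : P'.realizable (Φ ∪ D)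
      · obtain ⟨hrealiff, hSEeq⟩ := hIH (Φ ∪ D) (hbigD hDem) hΦDE
        have hse := hSEeq (hrealiff.mpr hreal')
        have hp1 : (Y, Y) ∈ (P.eReduct (Φ ∪ D)).SE :=
          (eReduct_shift_SE P hDv Φ).mp
            ⟨subset_refl Y, hYA', hYm, Program.model_iff_redModel_self.mp hYm⟩
        have hp2 : (Y, Y) ∈ (P'.eReduct (Φ ∪ D)).SE := hse ▸ hp1
        exact ((eReduct_shift_SE P' hDv Φ).mpr hp2).2.2.1
      · exact side_a P P' hPA hPE hPwf hP'A hP'E hP'wf hs hE_atoms hH hΦE hI'A hI'P'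
          hcomp hYA hYm (Or.inr hreal')
  -- Step 2: the reduct-model transfers.
  have hred' : (P'.eReduct Φ).redModel Y X := by
    by_cases hXeq : X = Y
    · subst hXeq
      exact Program.model_iff_redModel_self.mp hYm'
    · by_cases hDem : D = ∅
      · exact side_b P P' hPA hPE hPwf hP'A hP'E hP'wf hs hE_atoms hH hΦE hI'A hI'P
          hcomp hXYsub hXeq hYA hYm' hXred (Or.inl hDem)
      · by_cases hrealP : P.realizable (Φ ∪ D)
        · obtain ⟨hrealiff, hSEeq⟩ := hIH (Φ ∪ D) (hbigD hDem) hΦDE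
          have hse := hSEeq hrealP
          have hp1 : (X, Y) ∈ (P.eReduct (Φ ∪ D)).SE :=
            (eReduct_shift_SE P hDv Φ).mp ⟨hXYsub, hYA', hYm, hXred⟩
          have hp2 : (X, Y) ∈ (P'.eReduct (Φ ∪ D)).SE := hse ▸ hp1
          exact ((eReduct_shift_SE P' hDv Φ).mpr hp2).2.2.2
        · exact side_b P P' hPA hPE hPwf hP'A hP'E hP'wf hs hE_atoms hH hΦE hI'A hI'P
            hcomp hXYsub hXeq hYA hYm' hXred (Or.inr hrealP)
  exact Program.mem_SE.mpr ⟨hXYsub, by rwa [ELP.eReduct_A, hP'A], hYm', hred'⟩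

lemma real_transfer (P P' : ELP V)
    (hPA : P.A = A) (hPE : P.E = E) (hPwf : P.wf)
    (hP'A : P'.A = A) (hP'E : P'.E = E) (hP'wf : P'.wf)
    (hs : s ∉ A) (hE_atoms : ∀ ℓ ∈ E, ℓ.atom ∈ A)
    (hH : ∀ Q : ELP V, Q.wf → Q.isASP → (P.union Q).wvEq (P'.union Q))
    {Φ : Set (Lit V)} (hΦE : Φ ⊆ E) (h : P.realizable Φ) : P'.realizable Φ := by
  obtain ⟨I', hsub, hcomp⟩ := h
  have hcompE : compatible E Φ I' := hPE ▸ hcomp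
  have hI' : ∀ J ∈ I', J ⊆ A ∧ (P.eReduct Φ).model J := by
    intro J hJ
    obtain ⟨h1, h2⟩ := hsub hJ
    exact ⟨hPA ▸ h1, h2⟩
  have hmod' := side_real P P' hPA hPE hPwf hP'A hP'E hP'wf hs hE_atoms hH hΦE hI' hcompE
  refine ⟨I', ?_, hP'E.symm ▸ hcompE⟩
  intro J hJ
  exact ⟨hP'A.symm ▸ (hI' J hJ).1, hmod' J hJ⟩

/-- The main downward induction establishing equality of realizability and of
SE-models of reducts for all guesses inside `E`. -/
lemma master_claim (P P' : ELP V)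
    (hPA : P.A = A) (hPE : P.E = E) (hPwf : P.wf)
    (hP'A : P'.A = A) (hP'E : P'.E = E) (hP'wf : P'.wf)
    (hs : s ∉ A) (hE_atoms : ∀ ℓ ∈ E, ℓ.atom ∈ A) (hEfin : E.Finite)
    (hH : ∀ Q : ELP V, Q.wf → Q.isASP → (P.union Q).wvEq (P'.union Q)) :
    ∀ n : ℕ, ∀ Φ, Φ ⊆ E → (E \ Φ).ncard = n →
      ((P.realizable Φ ↔ P'.realizable Φ) ∧
       (P.realizable Φ → (P.eReduct Φ).SE = (P'.eReduct Φ).SE)) := by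
  have hH' : ∀ Q : ELP V, Q.wf → Q.isASP → (P'.union Q).wvEq (P.union Q) :=
    fun Q hw ha M => (hH Q hw ha M).symm
  intro n
  induction n using Nat.strong_induction_on with
  | _ n ih =>
    intro Φ hΦE hcard
    have hrealiff : P.realizable Φ ↔ P'.realizable Φ :=
      ⟨real_transfer P P' hPA hPE hPwf hP'A hP'E hP'wf hs hE_atoms hH hΦE,
       real_transfer P' P hP'A hP'E hP'wf hPA hPE hPwf hs hE_atoms hH' hΦE⟩
    refine ⟨hrealiff, ?_⟩
    intro hreal
    have hIH : ∀ Ψ, Φ ⊂ Ψ → Ψ ⊆ E →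
        ((P.realizable Ψ ↔ P'.realizable Ψ) ∧
         (P.realizable Ψ → (P.eReduct Ψ).SE = (P'.eReduct Ψ).SE)) := by
      intro Ψ hbig hΨE
      have hssub : E \ Ψ ⊂ E \ Φ := by
        obtain ⟨ℓ₀, hℓ₀Ψ, hℓ₀Φ⟩ := Set.exists_of_ssubset hbig
        refine ssubset_iff_subset_ne.mpr
          ⟨Set.diff_subset_diff_right hbig.subset, ?_⟩
        intro hEq
        have h1 : ℓ₀ ∈ E \ Φ := ⟨hΨE hℓ₀Ψ, hℓ₀Φ⟩
        rw [← hEq] at h1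
        exact h1.2 hℓ₀Ψ
      have hlt : (E \ Ψ).ncard < n := by
        rw [← hcard]
        exact Set.ncard_lt_ncard hssub hEfin.diff
      exact ih _ hlt Ψ hΨE rfl
    obtain ⟨I', hsub, hcomp⟩ := hreal
    have hcompE : compatible E Φ I' := hPE ▸ hcomp
    have hI'A : ∀ J ∈ I', J ⊆ A := fun J hJ => hPA ▸ (hsub hJ).1
    have hI'P : ∀ J ∈ I', (P.eReduct Φ).model J := fun J hJ => (hsub hJ).2
    have hI'P' : ∀ J ∈ I', (P'.eReduct Φ).model J :=
      side_real P P' hPA hPE hPwf hP'A hP'E hP'wf hs hE_atoms hH hΦE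
        (fun J hJ => ⟨hI'A J hJ, hI'P J hJ⟩) hcompE
    have hIH' : ∀ Ψ, Φ ⊂ Ψ → Ψ ⊆ E →
        ((P'.realizable Ψ ↔ P.realizable Ψ) ∧
         (P'.realizable Ψ → (P'.eReduct Ψ).SE = (P.eReduct Ψ).SE)) := by
      intro Ψ hbig hΨE
      obtain ⟨h1, h2⟩ := hIH Ψ hbig hΨE
      exact ⟨h1.symm, fun hr => (h2 (h1.mpr hr)).symm⟩
    apply subset_antisymm
    · exact se_incl P P' hPA hPE hPwf hP'A hP'E hP'wf hs hE_atoms hH hΦE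
        hI'A hI'P hI'P' hcompE hIH
    · exact se_incl P' P hP'A hP'E hP'wf hPA hPE hPwf hs hE_atoms hH' hΦE
        hI'A hI'P' hI'P hcompE hIH'

end Master


section Final

lemma realizable_inter {R : ELP V} (hw : R.wf) {Φ : Set (Lit V)}
    (h : R.realizable Φ) : R.realizable (Φ ∩ R.E) := by
  obtain ⟨I', hsub, hcomp⟩ := h
  refine ⟨I', ?_, compatible_inter hcomp⟩
  intro J hJ
  refine ⟨(hsub hJ).1, ?_⟩
  rw [← ELP.eReduct_inter hw Φ]
  exact (hsub hJ).2

lemma four_to_five {V : Type} [Infinite V] {A : Set V} (hA : A.Finite)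
    {E : Set (Lit V)} {R₁ R₂ : Set (ERule V)}
    (hwf₁ : (ELP.mk A E R₁).wf) (hwf₂ : (ELP.mk A E R₂).wf)
    (h4 : ELP.strongASPWVEq (ELP.mk A E R₁) (ELP.mk A E R₂)) :
    ∀ Φ, (ELP.mk A E R₁).SEfun Φ = (ELP.mk A E R₂).SEfun Φ := by
  set P : ELP V := ELP.mk A E R₁ with hPdef
  set P' : ELP V := ELP.mk A E R₂ with hP'def
  have hE_atoms : ∀ ℓ ∈ E, ℓ.atom ∈ A := hwf₁.1
  have hEfin : E.Finite := by
    apply Set.Finite.subset ((hA.image Lit.pos).union (hA.image Lit.neg))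
    intro ℓ hℓ
    cases ℓ with
    | pos a => exact Or.inl ⟨a, hE_atoms _ hℓ, rfl⟩
    | neg a => exact Or.inr ⟨a, hE_atoms _ hℓ, rfl⟩
  obtain ⟨s, hs'⟩ := hA.infinite_compl.nonempty
  have hs : s ∉ A := hs'
  have hH : ∀ Q : ELP V, Q.wf → Q.isASP → (P.union Q).wvEq (P'.union Q) := h4
  have hH' : ∀ Q : ELP V, Q.wf → Q.isASP → (P'.union Q).wvEq (P.union Q) :=
    fun Q hw ha M => (hH Q hw ha M).symm
  have hmaster := master_claim P P' rfl rfl hwf₁ rfl rfl hwf₂ hs hE_atoms hEfin hH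
  have hrealgen : ∀ (R R' : ELP V), R.A = A → R.E = E → R.wf →
      R'.A = A → R'.E = E → R'.wf →
      (∀ Q : ELP V, Q.wf → Q.isASP → (R.union Q).wvEq (R'.union Q)) →
      ∀ Φ, R.realizable Φ → R'.realizable Φ := by
    intro R R' hRA hRE hRwf hR'A hR'E hR'wf hHH Φ hreal
    obtain ⟨I', hsub, hcomp⟩ := hreal
    have hcompE : compatible E Φ I' := hRE ▸ hcomp
    have hcomp' : compatible E (Φ ∩ E) I' := compatible_inter hcompE
    have hI' : ∀ J ∈ I', J ⊆ A ∧ (R.eReduct (Φ ∩ E)).model J := by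
      intro J hJ
      refine ⟨hRA ▸ (hsub hJ).1, ?_⟩
      have he : R.eReduct Φ = R.eReduct (Φ ∩ E) := by
        rw [ELP.eReduct_inter hRwf Φ, hRE]
      rw [← he]
      exact (hsub hJ).2
    have hmod' := side_real R R' hRA hRE hRwf hR'A hR'E hR'wf hs hE_atoms hHH
      Set.inter_subset_right hI' hcomp'
    refine ⟨I', ?_, hR'E.symm ▸ hcompE⟩
    intro J hJ
    refine ⟨hR'A.symm ▸ (hRA ▸ (hsub hJ).1 : J ⊆ A), ?_⟩
    have he : R'.eReduct Φ = R'.eReduct (Φ ∩ E) := by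
      rw [ELP.eReduct_inter hR'wf Φ, hR'E]
    rw [he]
    exact hmod' J hJ
  intro Φ
  by_cases hreal : P.realizable Φ
  · have hreal' : P'.realizable Φ := hrealgen P P' rfl rfl hwf₁ rfl rfl hwf₂ hH Φ hreal
    have hrealint : P.realizable (Φ ∩ E) := realizable_inter hwf₁ hreal
    have hseq : (P.eReduct (Φ ∩ E)).SE = (P'.eReduct (Φ ∩ E)).SE :=
      (hmaster _ (Φ ∩ E) Set.inter_subset_right rfl).2 hrealint
    have hseqΦ : (P.eReduct Φ).SE = (P'.eReduct Φ).SE := by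
      have h1 : P.eReduct Φ = P.eReduct (Φ ∩ E) := ELP.eReduct_inter hwf₁ Φ
      have h2 : P'.eReduct Φ = P'.eReduct (Φ ∩ E) := ELP.eReduct_inter hwf₂ Φ
      rw [h1, h2]
      exact hseq
    ext p
    exact ⟨fun hp => ⟨hreal', (Set.ext_iff.mp hseqΦ p).mp hp.2⟩,
      fun hp => ⟨hreal, (Set.ext_iff.mp hseqΦ p).mpr hp.2⟩⟩
  · have hreal2 : ¬ P'.realizable Φ :=
      fun h => hreal (hrealgen P' P rfl rfl hwf₂ rfl rfl hwf₁ hH' Φ h)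
    ext p
    exact ⟨fun hp => absurd hp.1 hreal, fun hp => absurd hp.1 hreal2⟩

end Final

/-- For ELPs over a finite atom domain, strong ELP-CWV-, ASP-CWV-,
ELP-WV- and ASP-WV-equivalence and equality of SE-functions are all equivalent. -/
theorem stmt6 {V : Type} [Infinite V] (A : Set V) (hA : A.Finite) (E : Set (Lit V))
    (R₁ R₂ : Set (ERule V))
    (hwf₁ : (ELP.mk A E R₁).wf) (hwf₂ : (ELP.mk A E R₂).wf) :
    List.TFAE
      [ELP.strongELPCWVEq (ELP.mk A E R₁) (ELP.mk A E R₂),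
       ELP.strongASPCWVEq (ELP.mk A E R₁) (ELP.mk A E R₂),
       ELP.strongELPWVEq (ELP.mk A E R₁) (ELP.mk A E R₂),
       ELP.strongASPWVEq (ELP.mk A E R₁) (ELP.mk A E R₂),
       ∀ Φ : Set (Lit V), (ELP.mk A E R₁).SEfun Φ = (ELP.mk A E R₂).SEfun Φ] := by
  tfae_have 1 → 2 := fun h Q hw _ => h Q hw
  tfae_have 2 → 4 := fun h Q hw ha => cwvEq_to_wvEq rfl (h Q hw ha)
  tfae_have 1 → 3 := fun h Q hw => cwvEq_to_wvEq rfl (h Q hw)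
  tfae_have 3 → 4 := fun h Q hw _ => h Q hw
  tfae_have 4 → 5 := fun h => four_to_five hA hwf₁ hwf₂ h
  tfae_have 5 → 1 := fun h => SEfun_to_strongELPCWVEq hwf₁ hwf₂ h
  tfae_finish
end

section
/- Let Π₁ and Π be epistemic logic programs over the same atom domain 𝒜 and epistemic-literal domain ℰ, and let Φ ⊆ ℰ be a guess. Then 𝒮ℰ_{Π₁∪Π}(Φ) = 𝒮ℰ_{Π₁}(Φ) ∩ 𝒮ℰ_Π(Φ) if Φ is realizable in the set of SE-models 𝒮ℰ_{Π₁}(Φ) ∩ 𝒮ℰ_Π(Φ), and 𝒮ℰ_{Π₁∪Π}(Φ) = ∅ otherwise. -/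
variable {V : Type}

lemma redSat_self {r : Rule V} {Y : Set V} (h : r.sat Y) : r.redSat Y Y :=
  fun hn hp => h ⟨hp, hn⟩

lemma realizableIn_mono {E Φ : Set (Lit V)} {S T : Set (Set V)} (h : S ⊆ T) :
    realizableIn E Φ S → realizableIn E Φ T :=
  fun ⟨I', hI, hc⟩ => ⟨I', hI.trans h, hc⟩

lemma union_eReduct_R (A : Set V) (E : Set (Lit V)) (R₁ R : Set (ERule V)) (Φ : Set (Lit V)) :
    (((ELP.mk A E R₁).union (ELP.mk A E R)).eReduct Φ).R =
    ((ELP.mk A E R₁).eReduct Φ).R ∪ ((ELP.mk A E R).eReduct Φ).R := by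
  ext q
  simp only [ELP.union, ELP.eReduct, Set.mem_union, Set.mem_setOf_eq]
  constructor
  · rintro ⟨r, (h | h), h2, h3⟩
    exacts [Or.inl ⟨r, h, h2, h3⟩, Or.inr ⟨r, h, h2, h3⟩]
  · rintro (⟨r, h, h2, h3⟩ | ⟨r, h, h2, h3⟩)
    exacts [⟨r, Or.inl h, h2, h3⟩, ⟨r, Or.inr h, h2, h3⟩]

lemma union_eReduct_model (A : Set V) (E : Set (Lit V)) (R₁ R : Set (ERule V))
    (Φ : Set (Lit V)) (I : Set V) :
    (((ELP.mk A E R₁).union (ELP.mk A E R)).eReduct Φ).model I ↔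
    ((ELP.mk A E R₁).eReduct Φ).model I ∧ ((ELP.mk A E R).eReduct Φ).model I := by
  unfold Program.model
  rw [union_eReduct_R]
  constructor
  · exact fun h => ⟨fun r hr => h r (Or.inl hr), fun r hr => h r (Or.inr hr)⟩
  · rintro ⟨h1, h2⟩ r (hr | hr)
    exacts [h1 r hr, h2 r hr]

lemma union_eReduct_redModel (A : Set V) (E : Set (Lit V)) (R₁ R : Set (ERule V))
    (Φ : Set (Lit V)) (Y X : Set V) :
    (((ELP.mk A E R₁).union (ELP.mk A E R)).eReduct Φ).redModel Y X ↔
    ((ELP.mk A E R₁).eReduct Φ).redModel Y X ∧ ((ELP.mk A E R).eReduct Φ).redModel Y X := by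
  unfold Program.redModel
  rw [union_eReduct_R]
  constructor
  · exact fun h => ⟨fun r hr => h r (Or.inl hr), fun r hr => h r (Or.inr hr)⟩
  · rintro ⟨h1, h2⟩ r (hr | hr)
    exacts [h1 r hr, h2 r hr]

lemma model_redModel_self {P : Program V} {Y : Set V} (h : P.model Y) : P.redModel Y Y :=
  fun r hr => redSat_self (h r hr)

/-- SE-function of a union: `𝒮ℰ_{P₁∪P}(Φ)` equals
`𝒮ℰ_{P₁}(Φ) ∩ 𝒮ℰ_P(Φ)` if `Φ` is realizable in this set of SE-models
(i.e. in `{Y | ∃ X, (X,Y) ∈ 𝒮ℰ_{P₁}(Φ) ∩ 𝒮ℰ_P(Φ)}`), and `∅` otherwise. -/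
theorem stmt7 {V : Type} (A : Set V) (E : Set (Lit V)) (R₁ R : Set (ERule V))
    (hwf₁ : (ELP.mk A E R₁).wf) (hwf : (ELP.mk A E R).wf)
    (Φ : Set (Lit V)) (hΦ : Φ ⊆ E) :
    (realizableIn E Φ
        {Y | ∃ X, (X, Y) ∈ (ELP.mk A E R₁).SEfun Φ ∩ (ELP.mk A E R).SEfun Φ} →
      ((ELP.mk A E R₁).union (ELP.mk A E R)).SEfun Φ =
        (ELP.mk A E R₁).SEfun Φ ∩ (ELP.mk A E R).SEfun Φ) ∧
    (¬ realizableIn E Φ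
        {Y | ∃ X, (X, Y) ∈ (ELP.mk A E R₁).SEfun Φ ∩ (ELP.mk A E R).SEfun Φ} →
      ((ELP.mk A E R₁).union (ELP.mk A E R)).SEfun Φ = ∅) := by
  set P₁ := ELP.mk A E R₁ with hP₁
  set P₂ := ELP.mk A E R with hP₂
  set Pu := P₁.union P₂ with hPu
  set S : Set (Set V) := {Y | ∃ X, (X, Y) ∈ P₁.SEfun Φ ∩ P₂.SEfun Φ} with hS
  set U₁ : Set (Set V) := {I | I ⊆ A ∧ (P₁.eReduct Φ).model I} with hU₁
  set U₂ : Set (Set V) := {I | I ⊆ A ∧ (P₂.eReduct Φ).model I} with hU₂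
  -- realizability sets
  have hE : Pu.E = E := Set.union_self E
  have hA : Pu.A = A := Set.union_self A
  have hr₁ : P₁.realizable Φ = realizableIn E Φ U₁ := rfl
  have hr₂ : P₂.realizable Φ = realizableIn E Φ U₂ := rfl
  have hru : Pu.realizable Φ ↔ realizableIn E Φ (U₁ ∩ U₂) := by
    unfold ELP.realizable
    rw [hE]
    have : {I | I ⊆ Pu.A ∧ (Pu.eReduct Φ).model I} = U₁ ∩ U₂ := by
      ext I
      simp only [hA, Set.mem_setOf_eq, Set.mem_inter_iff, hU₁, hU₂,
        union_eReduct_model A E R₁ R Φ I]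
      have h := union_eReduct_model A E R₁ R Φ I
      exact ⟨fun ⟨a, b⟩ => ⟨⟨a, (h.mp b).1⟩, a, (h.mp b).2⟩, fun ⟨⟨a, b⟩, _, c⟩ => ⟨a, h.mpr ⟨b, c⟩⟩⟩
    rw [this]
  -- SE set of union reduct
  have hSE : (Pu.eReduct Φ).SE = (P₁.eReduct Φ).SE ∩ (P₂.eReduct Φ).SE := by
    ext p
    simp only [Program.SE, Set.mem_setOf_eq, Set.mem_inter_iff]
    have hA' : (Pu.eReduct Φ).A = A := hA
    have h1 : (P₁.eReduct Φ).A = A := rfl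
    rw [hA', h1, union_eReduct_model A E R₁ R Φ p.2,
      union_eReduct_redModel A E R₁ R Φ p.2 p.1]
    tauto
  -- S ⊆ U₁ ∩ U₂
  have hSU : S ⊆ U₁ ∩ U₂ := by
    rintro Y ⟨X, ⟨_, _, hYA, hm1, _⟩, ⟨_, _, _, hm2, _⟩⟩
    exact ⟨⟨hYA, hm1⟩, ⟨hYA, hm2⟩⟩
  -- if both are realizable, U₁ ∩ U₂ ⊆ S
  have hUS : P₁.realizable Φ → P₂.realizable Φ → U₁ ∩ U₂ ⊆ S := by
    rintro hre1 hre2 Y ⟨⟨hYA, hm1⟩, ⟨_, hm2⟩⟩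
    exact ⟨Y, ⟨hre1, le_refl Y, hYA, hm1, model_redModel_self hm1⟩,
      ⟨hre2, le_refl Y, hYA, hm2, model_redModel_self hm2⟩⟩
  constructor
  · intro hreal
    -- extract realizability of P₁ and P₂ from nonemptiness of a compatible subset of S
    obtain ⟨I', hI'S, hne, -, -⟩ := id hreal
    obtain ⟨Y, hY⟩ := hne
    obtain ⟨X, ⟨hre1, -⟩, ⟨hre2, -⟩⟩ := hI'S hY
    have hreu : Pu.realizable Φ := hru.mpr (realizableIn_mono hSU hreal)
    ext p
    simp only [ELP.SEfun, Set.mem_setOf_eq, Set.mem_inter_iff, hSE,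
      Set.mem_inter_iff]
    tauto
  · intro hnreal
    have hnr : ¬ Pu.realizable Φ := by
      intro hreu
      apply hnreal
      have hUU := hru.mp hreu
      have hre1 : P₁.realizable Φ :=
        hr₁ ▸ realizableIn_mono Set.inter_subset_left hUU
      have hre2 : P₂.realizable Φ :=
        hr₂ ▸ realizableIn_mono Set.inter_subset_right hUU
      exact realizableIn_mono (hUS hre1 hre2) hUU
    ext p
    simp only [ELP.SEfun, Set.mem_setOf_eq, Set.mem_empty_iff_false, iff_false]
    exact fun h => hnr h.1
end
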